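/- arXiv:math/0404179 — 7 statements merged into one kernel-verified Lean document; each statement's English description precedes it below -/
import Mathlib

section
/- If P is a hereditary property, (G,f) satisfies P, and W is a finite set of vertices of G, then there exists a finite f-factor F of G such that (G−F, f−d_F) satisfies P, d_F(x) = f(x) for every x ∈ W with f(x) finite, and d_F(x) > 0 for every x ∈ W with f(x) infinite. -/
open Cardinal Set
open scoped Classical

namespace FFactor

variable {V : Type}

/-- Degree of `x` with respect to an edge set `F`. -/
def deg (F : Set (Sym2 V)) (x : V) : Cardinal :=
  Cardinal.mk {e : Sym2 V // e ∈ F ∧ x ∈ e}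

/-- `(G, f) ∈ C`: edges are genuine 2-element sets and `f x ≤ d_E x`. -/
def inC (E : Set (Sym2 V)) (f : V → Cardinal) : Prop :=
  (∀ e ∈ E, ¬ e.IsDiag) ∧ ∀ x, f x ≤ deg E x

/-- `F` is an `f`-factor of the graph with edge set `E`. -/
def IsFactor (E F : Set (Sym2 V)) (f : V → Cardinal) : Prop :=
  F ⊆ E ∧ ∀ x, deg F x ≤ f x

/-- `F` is a perfect `f`-factor. -/
def IsPerfect (E F : Set (Sym2 V)) (f : V → Cardinal) : Prop :=
  F ⊆ E ∧ ∀ x, deg F x = f x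

/-- The function `f_{x,y}`: decrease `f` by one at `x` and `y` when `1 ≤ f v < ℵ₀`. -/
noncomputable def fxy (f : V → Cardinal) (x y : V) : V → Cardinal := fun v =>
  if (v = x ∨ v = y) ∧ 1 ≤ f v ∧ f v < ℵ₀ then (((f v).toNat - 1 : ℕ) : Cardinal) else f v

/-- A property of pairs `(G, f)` (over arbitrary vertex types). -/
def GraphProp : Type 1 := ∀ (W : Type), Set (Sym2 W) → (W → Cardinal) → Prop

/-- `P` is a hereditary property. (`P (G,f)` entails `(G,f) ∈ C`.) -/
def Hereditary (P : GraphProp) : Prop :=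
  ∀ (W : Type) (E : Set (Sym2 W)) (f : W → Cardinal), P W E f →
    inC E f ∧ ∀ x : W, 0 < f x →
      ∃ y : W, 0 < f y ∧ s(x, y) ∈ E ∧ P W (E \ {s(x, y)}) (fxy f x y)

/-- `(G,f)` is an `α`-obstruction. -/
inductive IsObstruction : ∀ {W : Type}, Ordinal.{0} → Set (Sym2 W) → (W → Cardinal) → Prop
  | mk {W : Type} (α : Ordinal.{0}) (E : Set (Sym2 W)) (f : W → Cardinal) (x : W)
      (β : W → Ordinal.{0}) (hx : 0 < f x)
      (h : ∀ y : W, s(x, y) ∈ E → 0 < f y →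
        IsObstruction (β y) (E \ {s(x, y)}) (fxy f x y))
      (hα : α = ⨆ y : {y : W // s(x, y) ∈ E ∧ 0 < f y}, Order.succ (β y.1)) :
      IsObstruction α E f

/-- The property `P₂`. -/
def P2 : GraphProp := fun _ E f => inC E f ∧ ∀ α, ¬ IsObstruction α E f

/-- The property `P₁`. -/
def P1 : GraphProp := fun _ E f => inC E f ∧ ∃ F, IsPerfect E F f

/-- `(v_i)_{0 ≤ i < k}` is a trail (`k ≤ ω`, modelled as `k : ℕ∞`). -/
def IsTrail (E : Set (Sym2 V)) (k : ℕ∞) (v : ℕ → V) : Prop :=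
  1 ≤ k ∧
  (∀ i : ℕ, 0 < i → (i : ℕ∞) < k → s(v (i - 1), v i) ∈ E) ∧
  (∀ i j : ℕ, 0 < i → 0 < j → (i : ℕ∞) < k → (j : ℕ∞) < k → i ≠ j →
    s(v (i - 1), v i) ≠ s(v (j - 1), v j))

/-- `(v_i)_{0 ≤ i < k}` is an `F`-augmenting trail. -/
def IsAugTrail (E F : Set (Sym2 V)) (f : V → Cardinal) (k : ℕ∞) (v : ℕ → V) : Prop :=
  IsTrail E k v ∧ 1 < k ∧
  (∀ i : ℕ, 0 < i → (i : ℕ∞) < k → (s(v (i - 1), v i) ∈ F ↔ Even i)) ∧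
  deg F (v 0) < f (v 0) ∧
  (k = ⊤ ∨ ∃ n : ℕ, k = (n : ℕ∞) ∧ Even n ∧
    ((v 0 ≠ v (n - 1) ∧ deg F (v (n - 1)) < f (v (n - 1))) ∨
     (v 0 = v (n - 1) ∧ deg F (v (n - 1)) + 1 < f (v (n - 1)))))

/-- The property `P₄`. -/
def P4 : GraphProp := fun _ E f =>
  inC E f ∧ ∀ F, IsFactor E F f → ∀ x, deg F x < f x →
    ∃ (k : ℕ∞) (v : _ → _), v 0 = x ∧ IsAugTrail E F f k v

/-- `C` is closed unbounded in `o`. -/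
def IsClubIn (C : Set Ordinal) (o : Ordinal) : Prop :=
  C ⊆ Set.Iio o ∧
  (∀ a < o, ∃ b ∈ C, a ≤ b) ∧
  (∀ a < o, (C ∩ Set.Iio a).Nonempty → sSup (C ∩ Set.Iio a) = a → a ∈ C)

/-- `S` is stationary in `o`. -/
def IsStationaryIn (S : Set Ordinal) (o : Ordinal) : Prop :=
  ∀ C, IsClubIn C o → (S ∩ C).Nonempty

/-- `V_α = (V \ A) ∪ f⁻¹(c)`. -/
def subV (f : V → Cardinal) (c : Cardinal) (A : Set V) : Set V :=
  Aᶜ ∪ {x | f x = c}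

/-- `E_α = {{x,y} ∈ E : x ∈ V_α, y ∈ V \ A}`. -/
def subE (E : Set (Sym2 V)) (f : V → Cardinal) (c : Cardinal) (A : Set V) : Set (Sym2 V) :=
  {e ∈ E | ∃ x y, e = s(x, y) ∧ x ∈ subV f c A ∧ y ∉ A}

/-- The edge set of a graph induced on the vertex subset `S`. -/
def inducedE (S : Set V) (E' : Set (Sym2 V)) : Set (Sym2 ↥S) :=
  {e : Sym2 ↥S | e.map Subtype.val ∈ E'}

/-- `(A_α)_{α < c.ord}` is a `P`-destruction of `(G, f)`, `c = κ⁺`. -/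
def PDestruction (P : GraphProp) (E : Set (Sym2 V)) (f : V → Cardinal)
    (c : Cardinal) (A : Ordinal → Set V) : Prop :=
  (∀ α < c.ord, ∀ β, α ≤ β → β < c.ord → A α ⊆ A β) ∧
  (∀ α < c.ord, Cardinal.mk (A α) < c) ∧
  (∀ α < c.ord, Order.IsSuccLimit α → A α = ⋃ β : Set.Iio α, A β.1) ∧
  (⋃ α : Set.Iio c.ord, A α.1) = Set.univ ∧
  IsStationaryIn {α | α < c.ord ∧
    ¬ P ↥(subV f c (A α)) (inducedE (subV f c (A α)) (subE E f c (A α)))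
        (fun x => f x.1)} c.ord

/-- `(G, f)` is `P`-destructed. -/
def PDestructed (P : GraphProp) (E : Set (Sym2 V)) (f : V → Cardinal) (c : Cardinal) : Prop :=
  ∃ A : Ordinal → Set V, PDestruction P E f c A

/-- The function `f - d_F`, for `F` a finite factor (with `ℵ₀ - n = ℵ₀`). -/
noncomputable def fsub (f : V → Cardinal) (F : Set (Sym2 V)) : V → Cardinal := fun x =>
  if f x < ℵ₀ then (((f x).toNat - (deg F x).toNat : ℕ) : Cardinal) else f x

/-- `F` is a `κ`-perfect `f`-factor of `(V, E)`. -/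
def IsKPerfect (κ : Cardinal) (E F : Set (Sym2 V)) (f : V → Cardinal) : Prop :=
  IsFactor E F f ∧ (∀ x, f x ≤ κ → deg F x = f x) ∧ ∀ x, κ < f x → 0 < deg F x


section Aux

/-- weight of a vertex: what remains to be done for it. -/
noncomputable def wt (f : V → Cardinal) (x : V) : ℕ :=
  if f x < ℵ₀ then (f x).toNat else 1

lemma deg_eq_mk_inter (F : Set (Sym2 V)) (x : V) :
    deg F x = Cardinal.mk ↥(F ∩ {e | x ∈ e}) := rfl

lemma deg_empty (x : V) : deg (∅ : Set (Sym2 V)) x = 0 := by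
  rw [deg_eq_mk_inter, Set.empty_inter, Cardinal.mk_emptyCollection]

lemma deg_lt_aleph0 {F : Set (Sym2 V)} (hF : F.Finite) (x : V) : deg F x < ℵ₀ := by
  rw [deg_eq_mk_inter]
  exact (hF.inter_of_left _).lt_aleph0

lemma deg_insert_of_mem {e : Sym2 V} {F : Set (Sym2 V)} (he : e ∉ F) {x : V} (hx : x ∈ e) :
    deg (insert e F) x = deg F x + 1 := by
  rw [deg_eq_mk_inter, deg_eq_mk_inter,
    Set.insert_inter_of_mem (show e ∈ {e : Sym2 V | x ∈ e} from hx),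
    Cardinal.mk_insert (fun h => he h.1)]

lemma deg_insert_of_not_mem {e : Sym2 V} {F : Set (Sym2 V)} {x : V} (hx : x ∉ e) :
    deg (insert e F) x = deg F x := by
  rw [deg_eq_mk_inter, deg_eq_mk_inter, Set.insert_inter_of_notMem (show e ∉ {e : Sym2 V | x ∈ e} from hx)]

lemma aux_statement_0 (P : GraphProp) (hP : Hereditary P) :
    ∀ (n : ℕ) (E : Set (Sym2 V)) (f : V → Cardinal), P V E f →
      ∀ W : Finset V, (∑ x ∈ W, wt f x) = n →
      ∃ F : Set (Sym2 V), F.Finite ∧ IsFactor E F f ∧ P V (E \ F) (fsub f F) ∧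
        (∀ x ∈ W, f x < ℵ₀ → deg F x = f x) ∧
        (∀ x ∈ W, ℵ₀ ≤ f x → 0 < deg F x) := by
  intro n
  induction n using Nat.strong_induction_on with
  | _ n ih =>
  intro E f h W hsum
  by_cases hex : ∃ x ∈ W, 0 < f x
  · obtain ⟨x, hxW, hxpos⟩ := hex
    obtain ⟨hC, hstep⟩ := hP V E f h
    obtain ⟨y, hypos, heE, hPnext⟩ := hstep x hxpos
    set e : Sym2 V := s(x, y) with he_def
    set f' := fxy f x y with hf'
    have hposon : ∀ v, (v = x ∨ v = y) → 0 < f v := by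
      rintro v (rfl | rfl) <;> assumption
    have hf'_off : ∀ v, ¬(v = x ∨ v = y) → f' v = f v := by
      intro v hv
      simp only [hf', fxy]
      rw [if_neg (fun hc => hv hc.1)]
    have hf'_on : ∀ v, (v = x ∨ v = y) → f v < ℵ₀ →
        f' v = (((f v).toNat - 1 : ℕ) : Cardinal) := by
      intro v hv hfin
      simp only [hf', fxy]
      rw [if_pos ⟨hv, Cardinal.one_le_iff_pos.mpr (hposon v hv), hfin⟩]
    have hf'_inf : ∀ v, ℵ₀ ≤ f v → f' v = f v := by
      intro v hv
      simp only [hf', fxy]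
      rw [if_neg (fun hc => absurd hc.2.2 (not_lt.mpr hv))]
    have hfin_iff : ∀ v, (f' v < ℵ₀ ↔ f v < ℵ₀) := by
      intro v
      by_cases hfin : f v < ℵ₀
      · by_cases hv : v = x ∨ v = y
        · rw [hf'_on v hv hfin]; simp [hfin, Cardinal.nat_lt_aleph0]
        · rw [hf'_off v hv]
      · rw [hf'_inf v (not_lt.mp hfin)]
    have htn_pos : ∀ v, (v = x ∨ v = y) → f v < ℵ₀ → 0 < (f v).toNat := by
      intro v hv hfin
      exact Cardinal.toNat_pos.mpr ⟨ne_of_gt (hposon v hv), hfin⟩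
    set W' : Finset V := W.filter (fun v => ¬((v = x ∨ v = y) ∧ ℵ₀ ≤ f v)) with hW'
    have hW'sub : W' ⊆ W := Finset.filter_subset _ _
    have hwt_le : ∀ v, wt f' v ≤ wt f v := by
      intro v
      by_cases hfin : f v < ℵ₀
      · by_cases hv : v = x ∨ v = y
        · rw [wt, wt, if_pos ((hfin_iff v).mpr hfin), if_pos hfin, hf'_on v hv hfin,
            Cardinal.toNat_natCast]
          omega
        · rw [wt, wt, hf'_off v hv]
      · rw [wt, wt, hf'_inf v (not_lt.mp hfin)]
    have hlt : ∑ v ∈ W', wt f' v < n := by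
      by_cases hfin : f x < ℵ₀
      · have hxW' : x ∈ W' := by
          rw [hW', Finset.mem_filter]
          exact ⟨hxW, fun hc => absurd hc.2 (not_le.mpr hfin)⟩
        calc ∑ v ∈ W', wt f' v < ∑ v ∈ W', wt f v := by
              refine Finset.sum_lt_sum (fun v _ => hwt_le v) ⟨x, hxW', ?_⟩
              rw [wt, wt, if_pos ((hfin_iff x).mpr hfin), if_pos hfin,
                hf'_on x (Or.inl rfl) hfin, Cardinal.toNat_natCast]
              have := htn_pos x (Or.inl rfl) hfin
              omega
          _ ≤ ∑ v ∈ W, wt f v := Finset.sum_le_sum_of_subset hW'sub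
          _ = n := hsum
      · have hinf : ℵ₀ ≤ f x := not_lt.mp hfin
        have hsub : W' ⊆ W.erase x := by
          intro v hv
          rw [hW', Finset.mem_filter] at hv
          refine Finset.mem_erase.mpr ⟨?_, hv.1⟩
          rintro rfl
          exact hv.2 ⟨Or.inl rfl, hinf⟩
        have h1 : ∑ v ∈ W.erase x, wt f v + wt f x = ∑ v ∈ W, wt f v :=
          Finset.sum_erase_add W _ hxW
        have h2 : wt f x = 1 := by rw [wt, if_neg hfin]
        calc ∑ v ∈ W', wt f' v ≤ ∑ v ∈ W', wt f v := Finset.sum_le_sum (fun v _ => hwt_le v)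
          _ ≤ ∑ v ∈ W.erase x, wt f v := Finset.sum_le_sum_of_subset hsub
          _ < n := by omega
    obtain ⟨F', hF'fin, hF'fac, hF'P, hF'deg, hF'inf⟩ :=
      ih _ hlt (E \ {e}) f' hPnext W' rfl
    have he_notin : e ∉ F' := fun hc => (hF'fac.1 hc).2 rfl
    set F : Set (Sym2 V) := insert e F' with hF
    have hdF' : ∀ v, deg F' v < ℵ₀ := deg_lt_aleph0 hF'fin
    have hdeg_on : ∀ v, (v = x ∨ v = y) → deg F v = deg F' v + 1 := by
      intro v hv
      exact deg_insert_of_mem he_notin (Sym2.mem_iff.mpr hv)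
    have hdeg_off : ∀ v, ¬(v = x ∨ v = y) → deg F v = deg F' v :=
      fun v hv => deg_insert_of_not_mem (fun hc => hv (Sym2.mem_iff.mp hc))
    -- the key computation at vertices of the new edge with finite f
    have hkey : ∀ v, (v = x ∨ v = y) → f v < ℵ₀ → f' v + 1 = f v := by
      intro v hv hfin
      rw [hf'_on v hv hfin]
      have h1 := htn_pos v hv hfin
      have : (((f v).toNat - 1 : ℕ) : Cardinal) + 1 = (((f v).toNat - 1 + 1 : ℕ) : Cardinal) := by
        push_cast; ring
      rw [this]
      have h2 : (f v).toNat - 1 + 1 = (f v).toNat := by omega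
      rw [h2, Cardinal.cast_toNat_of_lt_aleph0 hfin]
    have hdeg_eq_on : ∀ v, (v = x ∨ v = y) → f v < ℵ₀ → deg F' v = f' v →
        deg F v = f v := by
      intro v hv hfin hd
      rw [hdeg_on v hv, hd, hkey v hv hfin]
    have hFsubE : F ⊆ E := by
      rw [hF]
      exact Set.insert_subset heE (hF'fac.1.trans Set.diff_subset)
    have hFfac : IsFactor E F f := by
      refine ⟨hFsubE, fun v => ?_⟩
      by_cases hv : v = x ∨ v = y
      · by_cases hfin : f v < ℵ₀
        · rw [hdeg_on v hv, ← hkey v hv hfin]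
          exact add_le_add_left (hF'fac.2 v) 1
        · rw [hdeg_on v hv]
          exact le_of_lt (lt_of_lt_of_le
            (Cardinal.add_lt_aleph0 (hdF' v) Cardinal.one_lt_aleph0) (not_lt.mp hfin))
      · rw [hdeg_off v hv]
        rw [← hf'_off v hv]
        exact hF'fac.2 v
    -- fsub equality
    have hfsub : fsub f F = fsub f' F' := by
      funext v
      by_cases hfin : f v < ℵ₀
      · rw [fsub, fsub, if_pos hfin, if_pos ((hfin_iff v).mpr hfin)]
        by_cases hv : v = x ∨ v = y
        · have h1 : (f' v).toNat = (f v).toNat - 1 := by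
            rw [hf'_on v hv hfin, Cardinal.toNat_natCast]
          have h2 : (deg F v).toNat = (deg F' v).toNat + 1 := by
            have hd := hdeg_on v hv
            rw [← Cardinal.cast_toNat_of_lt_aleph0 (hdF' v)] at hd
            have : ((deg F' v).toNat : Cardinal) + 1 = (((deg F' v).toNat + 1 : ℕ) : Cardinal) := by
              push_cast; ring
            rw [this] at hd
            rw [hd, Cardinal.toNat_natCast]
          rw [h1, h2]
          congr 1
          omega
        · rw [hf'_off v hv, hdeg_off v hv]
      · rw [fsub, fsub, if_neg hfin,
          if_neg (fun hc => hfin ((hfin_iff v).mp hc)), hf'_inf v (not_lt.mp hfin)]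
    have hEdiff : E \ F = (E \ {e}) \ F' := by
      rw [hF, Set.diff_diff, Set.singleton_union]
    have hmemW' : ∀ v ∈ W, ¬((v = x ∨ v = y) ∧ ℵ₀ ≤ f v) → v ∈ W' := by
      intro v hv hc
      rw [hW', Finset.mem_filter]
      exact ⟨hv, hc⟩
    refine ⟨F, hF'fin.insert e, hFfac, ?_, ?_, ?_⟩
    · rw [hEdiff, hfsub]; exact hF'P
    · intro v hvW hfin
      by_cases hv : v = x ∨ v = y
      · have hvW' : v ∈ W' := hmemW' v hvW (fun hc => absurd hc.2 (not_le.mpr hfin))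
        exact hdeg_eq_on v hv hfin
          (hF'deg v hvW' ((hfin_iff v).mpr hfin))
      · have hvW' : v ∈ W' := hmemW' v hvW (fun hc => hv hc.1)
        rw [hdeg_off v hv, ← hf'_off v hv]
        exact hF'deg v hvW' ((hfin_iff v).mpr hfin)
    · intro v hvW hinf
      by_cases hv : v = x ∨ v = y
      · rw [hdeg_on v hv]
        exact lt_of_lt_of_le zero_lt_one le_add_self
      · have hvW' : v ∈ W' := hmemW' v hvW (fun hc => hv hc.1)
        rw [hdeg_off v hv]
        refine hF'inf v hvW' ?_
        rw [hf'_inf v hinf]; exact hinf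
  · push_neg at hex
    have hzero : ∀ v ∈ W, f v = 0 := fun v hv => le_zero_iff.mp (hex v hv)
    have hfsub : fsub f (∅ : Set (Sym2 V)) = f := by
      funext v
      rw [fsub]
      by_cases hfin : f v < ℵ₀
      · rw [if_pos hfin, deg_empty, map_zero, Nat.sub_zero,
          Cardinal.cast_toNat_of_lt_aleph0 hfin]
      · rw [if_neg hfin]
    refine ⟨∅, Set.finite_empty, ⟨Set.empty_subset _, fun v => by rw [deg_empty]; exact zero_le⟩,
      ?_, ?_, ?_⟩
    · rw [Set.diff_empty, hfsub]; exact h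
    · intro v hv _
      rw [deg_empty, hzero v hv]
    · intro v hv hinf
      rw [hzero v hv] at hinf
      exact absurd hinf (not_le.mpr Cardinal.aleph0_pos)

end Aux

/-- Remark. -/
theorem statement_0 (P : GraphProp) (hP : Hereditary P) (V : Type)
    (E : Set (Sym2 V)) (f : V → Cardinal) (h : P V E f)
    (W : Set V) (hW : W.Finite) :
    ∃ F : Set (Sym2 V), F.Finite ∧ IsFactor E F f ∧
      P V (E \ F) (fsub f F) ∧
      (∀ x ∈ W, f x < ℵ₀ → deg F x = f x) ∧
      (∀ x ∈ W, ℵ₀ ≤ f x → 0 < deg F x) := by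
  obtain ⟨F, h1, h2, h3, h4, h5⟩ :=
    aux_statement_0 P hP (∑ x ∈ hW.toFinset, wt f x) E f h hW.toFinset rfl
  exact ⟨F, h1, h2, h3,
    fun x hx => h4 x (hW.mem_toFinset.mpr hx),
    fun x hx => h5 x (hW.mem_toFinset.mpr hx)⟩

end FFactor
end

section
/- The property P₂(G,f) := "(G,f) is not an α-obstruction for any ordinal α" is a hereditary property. -/
open Cardinal Set
open scoped Classical

namespace FFactor

variable {V : Type}

lemma deg_eq_mk_set (E : Set (Sym2 V)) (v : V) :
    deg E v = Cardinal.mk ↥{e | e ∈ E ∧ v ∈ e} := rfl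

lemma deg_le_diff_add_one (E : Set (Sym2 V)) (e : Sym2 V) (v : V) :
    deg E v ≤ deg (E \ {e}) v + 1 := by
  rw [deg_eq_mk_set, deg_eq_mk_set]
  have hsub : {e' | e' ∈ E ∧ v ∈ e'} ⊆ {e' | e' ∈ E \ {e} ∧ v ∈ e'} ∪ {e} := by
    intro e' ⟨h1, h2⟩
    by_cases he : e' = e
    · exact Or.inr he
    · exact Or.inl ⟨⟨h1, he⟩, h2⟩
  calc Cardinal.mk ↥{e' | e' ∈ E ∧ v ∈ e'}
      ≤ Cardinal.mk ↥({e' | e' ∈ E \ {e} ∧ v ∈ e'} ∪ {e}) := Cardinal.mk_le_mk_of_subset hsub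
    _ ≤ Cardinal.mk ↥{e' | e' ∈ E \ {e} ∧ v ∈ e'} + Cardinal.mk ↥({e} : Set (Sym2 V)) :=
        Cardinal.mk_union_le _ _
    _ = _ := by rw [Cardinal.mk_singleton]

lemma deg_diff_of_not_mem (E : Set (Sym2 V)) (e : Sym2 V) (v : V) (hv : v ∉ e) :
    deg (E \ {e}) v = deg E v := by
  rw [deg_eq_mk_set, deg_eq_mk_set]
  have hset : {e' | e' ∈ E \ {e} ∧ v ∈ e'} = {e' | e' ∈ E ∧ v ∈ e'} := by
    ext e'
    simp only [Set.mem_setOf_eq, Set.mem_diff, Set.mem_singleton_iff]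
    constructor
    · rintro ⟨⟨h1, _⟩, h2⟩; exact ⟨h1, h2⟩
    · rintro ⟨h1, h2⟩
      refine ⟨⟨h1, ?_⟩, h2⟩
      rintro rfl; exact hv h2
  rw [hset]

lemma inC_reduced {E : Set (Sym2 V)} {f : V → Cardinal} (hC : inC E f) (x y : V)
    (hxy : s(x, y) ∈ E) : inC (E \ {s(x, y)}) (fxy f x y) := by
  obtain ⟨hdiag, hdeg⟩ := hC
  refine ⟨fun e he => hdiag e he.1, fun v => ?_⟩
  set e : Sym2 V := s(x, y)
  unfold fxy
  by_cases hmem : v = x ∨ v = y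
  · -- v ∈ {x, y}
    have hle : f v ≤ deg (E \ {e}) v + 1 := (hdeg v).trans (deg_le_diff_add_one E e v)
    by_cases hfin : 1 ≤ f v ∧ f v < ℵ₀
    · rw [if_pos ⟨hmem, hfin⟩]
      rcases lt_or_ge (deg (E \ {e}) v) ℵ₀ with hd | hd
      · obtain ⟨k, hk⟩ := Cardinal.lt_aleph0.1 hd
        rw [hk] at hle ⊢
        obtain ⟨n, hn⟩ := Cardinal.lt_aleph0.1 hfin.2
        rw [hn] at hle ⊢
        rw [Cardinal.toNat_natCast]
        have hnk : n ≤ k + 1 := by exact_mod_cast hle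
        exact_mod_cast Nat.sub_le_of_le_add hnk
      · exact le_trans (le_of_lt (lt_of_lt_of_le (Cardinal.nat_lt_aleph0 _) hd)) le_rfl
    · rw [if_neg (fun h => hfin h.2)]
      rcases not_and_or.1 hfin with h1 | hinf
      · -- ¬ 1 ≤ f v, so f v = 0
        have h0 : f v = 0 := Cardinal.lt_one_iff_zero.1 (not_le.1 h1)
        rw [h0]; exact zero_le
      · -- f v infinite
        push_neg at hinf
        have hd : ℵ₀ ≤ deg (E \ {e}) v := by
          by_contra hlt
          push_neg at hlt
          have : deg (E \ {e}) v + 1 < ℵ₀ := Cardinal.add_lt_aleph0 hlt Cardinal.one_lt_aleph0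
          exact absurd (hinf.trans hle) (not_le.2 this)
        calc f v ≤ deg (E \ {e}) v + 1 := hle
          _ = deg (E \ {e}) v := by
              rw [Cardinal.add_eq_max hd, max_eq_left (Cardinal.one_lt_aleph0.le.trans hd)]
  · -- v ∉ {x, y}: degrees equal
    push_neg at hmem
    have hv : v ∉ e := by
      simp only [e, Sym2.mem_iff]
      rintro (rfl | rfl)
      exacts [hmem.1 rfl, hmem.2 rfl]
    rw [if_neg (fun h => (h.1.elim (fun h => hmem.1 h) (fun h => hmem.2 h)))]
    rw [deg_diff_of_not_mem E e v hv]
    exact hdeg v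

/-- `P₂` ("not an `α`-obstruction for any `α`") is hereditary. -/
theorem statement_2 : Hereditary P2 := by
  intro W E f hP
  obtain ⟨hC, hno⟩ := hP
  refine ⟨hC, fun x hx => ?_⟩
  by_contra hcon
  push_neg at hcon
  -- For every neighbor y with 0 < f y, the reduced pair admits an obstruction
  have key : ∀ y : W, s(x, y) ∈ E → 0 < f y →
      ∃ α, IsObstruction α (E \ {s(x, y)}) (fxy f x y) := by
    intro y hE hy
    have hCred := inC_reduced hC x y hE
    have := hcon y hy hE
    unfold P2 at this
    rw [not_and_or] at this
    rcases this with h | h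
    · exact absurd hCred h
    · push_neg at h
      exact h
  classical
  set β : W → Ordinal.{0} := fun y =>
    if h : s(x, y) ∈ E ∧ 0 < f y then (key y h.1 h.2).choose else 0 with hβ
  have hobs : ∀ y : W, s(x, y) ∈ E → 0 < f y →
      IsObstruction (β y) (E \ {s(x, y)}) (fxy f x y) := by
    intro y hE hy
    simp only [hβ, dif_pos (And.intro hE hy)]
    exact (key y hE hy).choose_spec
  exact hno _ (IsObstruction.mk _ E f x β hx hobs rfl)

end FFactor
end

section
/- Let (G,f) ∈ C with |V(G)| = ℵ₀. If P is a hereditary property and P(G,f) holds, then G possesses a perfect f-factor. -/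
open Cardinal Set
open scoped Classical

namespace FFactor

variable {V : Type}

section Aux

/-- State of the greedy construction: a graph and demand function still satisfying `P`. -/
structure StA (V : Type) (P : GraphProp) where
  Ed : Set (Sym2 V)
  fn : V → Cardinal
  hp : P V Ed fn

noncomputable def stepSt {P : GraphProp} (hP : Hereditary P) (s : StA V P) (x : V) : StA V P :=
  if hx : 0 < s.fn x then
    ⟨s.Ed \ {s(x, Classical.choose ((hP V s.Ed s.fn s.hp).2 x hx))},
     fxy s.fn x (Classical.choose ((hP V s.Ed s.fn s.hp).2 x hx)),
     (Classical.choose_spec ((hP V s.Ed s.fn s.hp).2 x hx)).2.2⟩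
  else s

noncomputable def stepEdge {P : GraphProp} (hP : Hereditary P) (s : StA V P) (x : V) :
    Option (Sym2 V) :=
  if hx : 0 < s.fn x then some s(x, Classical.choose ((hP V s.Ed s.fn s.hp).2 x hx)) else none

lemma step_spec {P : GraphProp} (hP : Hereditary P) (s : StA V P) (x : V) :
    (¬ 0 < s.fn x ∧ stepEdge hP s x = none ∧ stepSt hP s x = s) ∨
    ∃ y, 0 < s.fn x ∧ 0 < s.fn y ∧ s(x, y) ∈ s.Ed ∧
      stepEdge hP s x = some s(x, y) ∧
      (stepSt hP s x).Ed = s.Ed \ {s(x, y)} ∧ (stepSt hP s x).fn = fxy s.fn x y := by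
  by_cases hx : 0 < s.fn x
  · right
    exact ⟨_, hx, (Classical.choose_spec ((hP V s.Ed s.fn s.hp).2 x hx)).1,
      (Classical.choose_spec ((hP V s.Ed s.fn s.hp).2 x hx)).2.1,
      by simp [stepEdge, hx], by simp [stepSt, hx], by simp [stepSt, hx]⟩
  · left
    exact ⟨hx, by simp [stepEdge, hx], by simp [stepSt, hx]⟩

noncomputable def states {P : GraphProp} (hP : Hereditary P) (s0 : StA V P) (tgt : ℕ → V) :
    ℕ → StA V P
  | 0 => s0
  | n + 1 => stepSt hP (states hP s0 tgt n) (tgt n)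

lemma fxy_le (f : V → Cardinal) (x y v : V) : fxy f x y v ≤ f v := by
  unfold fxy
  split
  · next hcond =>
    calc (((f v).toNat - 1 : ℕ) : Cardinal) ≤ (((f v).toNat : ℕ) : Cardinal) := by
          exact_mod_cast Nat.sub_le _ _
      _ = f v := Cardinal.cast_toNat_of_lt_aleph0 hcond.2.2
  · exact le_rfl

lemma fxy_of_not (f : V → Cardinal) (x y v : V)
    (h : ¬ ((v = x ∨ v = y) ∧ 1 ≤ f v ∧ f v < ℵ₀)) : fxy f x y v = f v := if_neg h

lemma fxy_add_one (f : V → Cardinal) (x y v : V) (hv : v = x ∨ v = y) (h0 : 0 < f v)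
    (hfin : f v < ℵ₀) : fxy f x y v + 1 = f v := by
  obtain ⟨n, hn⟩ := Cardinal.lt_aleph0.1 hfin
  have hcond : (v = x ∨ v = y) ∧ 1 ≤ f v ∧ f v < ℵ₀ :=
    ⟨hv, Cardinal.one_le_iff_pos.mpr h0, hfin⟩
  have hnpos : 0 < n := by
    rw [hn] at h0; exact_mod_cast h0
  rw [fxy, if_pos hcond, hn, Cardinal.toNat_natCast]
  rw [hn] at *
  have : ((n - 1 : ℕ) : Cardinal) + ((1 : ℕ) : Cardinal) = ((n - 1 + 1 : ℕ) : Cardinal) := by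
    push_cast; ring
  rw [show ((1 : Cardinal)) = ((1 : ℕ) : Cardinal) by norm_cast, this,
    Nat.sub_add_cancel hnpos]

end Aux

/-- Theorem 1. -/
theorem statement_5 (V : Type) (E : Set (Sym2 V)) (f : V → Cardinal)
    (hC : inC E f) (hV : Cardinal.mk V = ℵ₀) (hf : ∀ x, f x ≤ ℵ₀)
    (P : GraphProp) (hP : Hereditary P) (h : P V E f) :
    ∃ F, IsPerfect E F f := by
  classical
  have hcount : Countable V := Cardinal.mk_le_aleph0_iff.mp hV.le
  obtain ⟨g⟩ : Nonempty (ℕ ≃ V) := Cardinal.eq.mp (by rw [hV, Cardinal.mk_nat])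
  set tgt : ℕ → V := fun n => g (Nat.unpair n).1 with htgt
  set s0 : StA V P := ⟨E, f, h⟩ with hs0
  set S : ℕ → StA V P := states hP s0 tgt with hSdef
  set ch : ℕ → Option (Sym2 V) := fun n => stepEdge hP (S n) (tgt n) with hchdef
  have hS0 : S 0 = s0 := rfl
  have hSsucc : ∀ n, S (n + 1) = stepSt hP (S n) (tgt n) := fun n => rfl
  -- basic step dichotomy
  have hstep : ∀ n, (¬ 0 < (S n).fn (tgt n) ∧ ch n = none ∧ S (n + 1) = S n) ∨
      ∃ y, 0 < (S n).fn (tgt n) ∧ 0 < (S n).fn y ∧ s(tgt n, y) ∈ (S n).Ed ∧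
        ch n = some s(tgt n, y) ∧
        (S (n + 1)).Ed = (S n).Ed \ {s(tgt n, y)} ∧ (S (n + 1)).fn = fxy (S n).fn (tgt n) y := by
    intro n
    have := step_spec hP (S n) (tgt n)
    rw [← hSsucc n] at this
    exact this
  -- edge sets decrease
  have hE_step : ∀ n, (S (n + 1)).Ed ⊆ (S n).Ed := by
    intro n
    rcases hstep n with ⟨_, _, heq⟩ | ⟨y, _, _, _, _, hEd, _⟩
    · rw [heq]
    · rw [hEd]; exact Set.diff_subset
  have hE_mono : ∀ m n, m ≤ n → (S n).Ed ⊆ (S m).Ed := by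
    intro m n hmn
    induction hmn with
    | refl => exact le_rfl
    | step h ih => exact le_trans (hE_step _) ih
  have hE_sub : ∀ n, (S n).Ed ⊆ E := fun n => hE_mono 0 n (Nat.zero_le n)
  -- chosen edges belong to current graph and are removed
  have hch_mem : ∀ n e, ch n = some e → e ∈ (S n).Ed ∧ e ∉ (S (n + 1)).Ed := by
    intro n e hce
    rcases hstep n with ⟨_, hnone, _⟩ | ⟨y, _, _, hmem, hsome, hEd, _⟩
    · rw [hnone] at hce; exact absurd hce (by simp)
    · rw [hsome] at hce
      obtain rfl : s(tgt n, y) = e := Option.some.inj hce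
      refine ⟨hmem, ?_⟩
      rw [hEd]
      simp
  -- chosen edges are pairwise distinct
  have hch_inj : ∀ m n e e', m < n → ch m = some e → ch n = some e' → e ≠ e' := by
    intro m n e e' hmn hcm hcn heq
    subst heq
    have h1 : e ∉ (S (m + 1)).Ed := (hch_mem m e hcm).2
    have h2 : e ∈ (S n).Ed := (hch_mem n e hcn).1
    exact h1 (hE_mono (m + 1) n hmn h2)
  -- fn is nonincreasing
  have hf_step : ∀ n v, (S (n + 1)).fn v ≤ (S n).fn v := by
    intro n v
    rcases hstep n with ⟨_, _, heq⟩ | ⟨y, _, _, _, _, _, hfn⟩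
    · rw [heq]
    · rw [hfn]; exact fxy_le _ _ _ _
  have hf_mono : ∀ m n, m ≤ n → ∀ v, (S n).fn v ≤ (S m).fn v := by
    intro m n hmn
    induction hmn with
    | refl => exact fun v => le_rfl
    | step h ih => exact fun v => le_trans (hf_step _ v) (ih v)
  -- infinite demands stay unchanged
  have hf_inf : ∀ n v, ¬ f v < ℵ₀ → (S n).fn v = f v := by
    intro n
    induction n with
    | zero => intro v _; rfl
    | succ n ih =>
      intro v hv
      rcases hstep n with ⟨_, _, heq⟩ | ⟨y, _, _, _, _, _, hfn⟩
      · rw [heq]; exact ih v hv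
      · rw [hfn, fxy_of_not]
        · exact ih v hv
        · rw [ih v hv]
          exact fun hc => hv hc.2.2
  -- the counting function
  set cnt : ℕ → V → ℕ :=
    fun n v => ((Finset.range n).filter (fun m => ∃ e, ch m = some e ∧ v ∈ e)).card with hcnt
  have hcnt_succ : ∀ n v, cnt (n + 1) v =
      cnt n v + (if ∃ e, ch n = some e ∧ v ∈ e then 1 else 0) := by
    intro n v
    rw [hcnt]
    simp only [Finset.range_add_one, Finset.filter_insert]
    split
    · rw [Finset.card_insert_of_notMem (by simp), Nat.add_comm]
    · rfl
  have hcnt_mono : ∀ m n v, m ≤ n → cnt m v ≤ cnt n v := by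
    intro m n v hmn
    exact Finset.card_le_card (Finset.filter_subset_filter _ (Finset.range_subset_range.mpr hmn))
  -- the key finite invariant
  have hfin_inv : ∀ v, f v < ℵ₀ → ∀ n, (S n).fn v + (cnt n v : Cardinal) = f v := by
    intro v hfv n
    induction n with
    | zero => simp [hcnt, hS0, hs0]
    | succ n ih =>
      rcases hstep n with ⟨_, hnone, heq⟩ | ⟨y, hx, hy, _, hsome, _, hfn⟩
      · have : ¬ ∃ e, ch n = some e ∧ v ∈ e := by
          rintro ⟨e, hce, _⟩; rw [hnone] at hce; exact absurd hce (by simp)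
        rw [hcnt_succ, if_neg this, heq]
        simpa using ih
      · by_cases hv : v = tgt n ∨ v = y
        · have hle : (S n).fn v ≤ f v := by
            calc (S n).fn v ≤ (S n).fn v + (cnt n v : Cardinal) := self_le_add_right _ _
              _ = f v := ih
          have hvfin : (S n).fn v < ℵ₀ := lt_of_le_of_lt hle hfv
          have hvpos : 0 < (S n).fn v := by
            rcases hv with rfl | rfl
            · exact hx
            · exact hy
          have hthru : ∃ e, ch n = some e ∧ v ∈ e :=
            ⟨s(tgt n, y), hsome, Sym2.mem_iff.mpr hv⟩
          rw [hcnt_succ, if_pos hthru, hfn]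
          have hdec : fxy (S n).fn (tgt n) y v + 1 = (S n).fn v :=
            fxy_add_one _ _ _ _ hv hvpos hvfin
          calc fxy (S n).fn (tgt n) y v + ((cnt n v + 1 : ℕ) : Cardinal)
              = (fxy (S n).fn (tgt n) y v + 1) + (cnt n v : Cardinal) := by
                push_cast; ring
            _ = (S n).fn v + (cnt n v : Cardinal) := by rw [hdec]
            _ = f v := ih
        · have hnthru : ¬ ∃ e, ch n = some e ∧ v ∈ e := by
            rintro ⟨e, hce, hve⟩
            rw [hsome] at hce
            obtain rfl : s(tgt n, y) = e := Option.some.inj hce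
            exact hv (Sym2.mem_iff.mp hve)
          rw [hcnt_succ, if_neg hnthru, hfn, fxy_of_not _ _ _ _ (fun hc => hv hc.1)]
          simpa using ih
  -- every vertex is targeted infinitely often
  have htgt_inf : ∀ v, {n : ℕ | tgt n = v}.Infinite := by
    intro v
    refine Set.infinite_of_injective_forall_mem (f := fun j : ℕ => Nat.pair (g.symm v) j) ?_ ?_
    · intro a b hab
      exact (Nat.pair_eq_pair.mp hab).2
    · intro j
      simp [htgt, Nat.unpair_pair]
  -- a positive target forces an edge through it
  have hforce : ∀ n, 0 < (S n).fn (tgt n) → ∃ e, ch n = some e ∧ tgt n ∈ e := by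
    intro n hpos
    rcases hstep n with ⟨hneg, _, _⟩ | ⟨y, _, _, _, hsome, _, _⟩
    · exact absurd hpos hneg
    · exact ⟨s(tgt n, y), hsome, Sym2.mem_iff.mpr (Or.inl rfl)⟩
  -- the factor
  refine ⟨{e | ∃ n, ch n = some e}, ?_, ?_⟩
  · rintro e ⟨n, hce⟩
    exact hE_sub n ((hch_mem n e hce).1)
  · intro v
    rcases lt_or_eq_of_le (hf v) with hfv | hfv
    · -- finite case
      have hcnt_le : ∀ n, (cnt n v : Cardinal) ≤ f v := by
        intro n
        calc (cnt n v : Cardinal) ≤ (S n).fn v + (cnt n v : Cardinal) := self_le_add_left _ _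
          _ = f v := hfin_inv v hfv n
      have hSfin : {n : ℕ | ∃ e, ch n = some e ∧ v ∈ e}.Finite := by
        by_contra hinf
        rw [← Set.not_infinite, not_not] at hinf
        have hub : ∀ k : ℕ, ∃ n, k ≤ cnt n v := by
          intro k
          induction k with
          | zero => exact ⟨0, Nat.zero_le _⟩
          | succ k ih =>
            obtain ⟨n, hn⟩ := ih
            have : ∃ m ∈ {n : ℕ | ∃ e, ch n = some e ∧ v ∈ e}, n ≤ m := by
              by_contra hc
              push_neg at hc
              exact hinf (Set.Finite.subset (Set.finite_Iio n) (fun m hm => hc m hm))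
            obtain ⟨m, hm, hnm⟩ := this
            refine ⟨m + 1, ?_⟩
            rw [hcnt_succ, if_pos (show ∃ e, ch m = some e ∧ v ∈ e from hm)]
            exact Nat.add_le_add (le_trans hn (hcnt_mono n m v hnm)) le_rfl
        obtain ⟨n, hn⟩ := hub ((f v).toNat + 1)
        have h1 : (((f v).toNat + 1 : ℕ) : Cardinal) ≤ (cnt n v : Cardinal) := by
          exact_mod_cast hn
        have h2 : (((f v).toNat + 1 : ℕ) : Cardinal) ≤ f v := le_trans h1 (hcnt_le n)
        rw [← Cardinal.cast_toNat_of_lt_aleph0 hfv] at h2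
        have : (f v).toNat + 1 ≤ (f v).toNat := by exact_mod_cast h2
        omega
      -- find a step where the demand at v is exhausted
      obtain ⟨N, hNtgt, hNnot⟩ :
          ∃ N, tgt N = v ∧ ¬ ∃ e, ch N = some e ∧ v ∈ e := by
        have := ((htgt_inf v).diff hSfin).nonempty
        obtain ⟨N, hN1, hN2⟩ := this
        exact ⟨N, hN1, hN2⟩
      have hN0 : (S N).fn v = 0 := by
        by_contra hc
        have hpos : 0 < (S N).fn v := pos_iff_ne_zero.mpr hc
        rw [← hNtgt] at hpos
        obtain ⟨e, hce, hve⟩ := hforce N hpos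
        rw [hNtgt] at hve
        exact hNnot ⟨e, hce, hve⟩
      have hlater : ∀ m, N ≤ m → ¬ ∃ e, ch m = some e ∧ v ∈ e := by
        rintro m hNm ⟨e, hce, hve⟩
        have hm0 : (S m).fn v = 0 :=
          le_antisymm (hN0 ▸ hf_mono N m hNm v) zero_le
        rcases hstep m with ⟨_, hnone, _⟩ | ⟨y, hx, hy, _, hsome, _, _⟩
        · rw [hnone] at hce; exact absurd hce (by simp)
        · rw [hsome] at hce
          obtain rfl : s(tgt m, y) = e := Option.some.inj hce
          rcases Sym2.mem_iff.mp hve with rfl | rfl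
          · rw [hm0] at hx; exact lt_irrefl _ hx
          · rw [hm0] at hy; exact lt_irrefl _ hy
      -- the bijection with the finset of producing steps
      set Fs := (Finset.range N).filter (fun m => ∃ e, ch m = some e ∧ v ∈ e) with hFs
      have hθ : ∀ m : ↥Fs, ∃ e, ch m.1 = some e ∧ v ∈ e := by
        rintro ⟨m, hm⟩
        exact (Finset.mem_filter.mp hm).2
      set θ : ↥Fs → {e : Sym2 V // e ∈ {e | ∃ n, ch n = some e} ∧ v ∈ e} :=
        fun m => ⟨Classical.choose (hθ m),
          ⟨m.1, (Classical.choose_spec (hθ m)).1⟩, (Classical.choose_spec (hθ m)).2⟩ with hθdef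
      have hbij : Function.Bijective θ := by
        constructor
        · rintro ⟨a, ha⟩ ⟨b, hb⟩ hab
          have hea := (Classical.choose_spec (hθ ⟨a, ha⟩)).1
          have heb := (Classical.choose_spec (hθ ⟨b, hb⟩)).1
          have heq : Classical.choose (hθ ⟨a, ha⟩) = Classical.choose (hθ ⟨b, hb⟩) := by
            simpa [hθdef] using congrArg Subtype.val hab
          rcases lt_trichotomy a b with hlt | heqab | hlt
          · exact absurd heq (hch_inj a b _ _ hlt hea heb)
          · exact Subtype.ext heqab
          · exact absurd heq.symm (hch_inj b a _ _ hlt heb hea)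
        · rintro ⟨e, ⟨n, hcn⟩, hve⟩
          have hnS : ∃ e, ch n = some e ∧ v ∈ e := ⟨e, hcn, hve⟩
          have hnN : n < N := by
            by_contra hc
            exact hlater n (le_of_not_gt hc) hnS
          have hmem : n ∈ Fs := Finset.mem_filter.mpr ⟨Finset.mem_range.mpr hnN, hnS⟩
          refine ⟨⟨n, hmem⟩, ?_⟩
          have hspec := (Classical.choose_spec (hθ ⟨n, hmem⟩)).1
          exact Subtype.ext (Option.some.inj (hspec.symm.trans hcn))
      have hmk : deg {e | ∃ n, ch n = some e} v = (cnt N v : Cardinal) := by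
        rw [deg, ← Cardinal.mk_congr (Equiv.ofBijective θ hbij), Cardinal.mk_coe_finset]
      rw [hmk]
      have := hfin_inv v hfv N
      rw [hN0, zero_add] at this
      exact this
    · -- infinite case: f v = ℵ₀
      have hnotfin : ¬ f v < ℵ₀ := by rw [← hfv]; exact lt_irrefl _
      have hSinf : {n : ℕ | ∃ e, ch n = some e ∧ v ∈ e}.Infinite := by
        apply Set.Infinite.mono _ (htgt_inf v)
        intro n hn
        have hpos : 0 < (S n).fn (tgt n) := by
          rw [show tgt n = v from hn, hf_inf n v hnotfin, hfv]
          exact aleph0_pos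
        obtain ⟨e, hce, hve⟩ := hforce n hpos
        exact ⟨e, hce, (show tgt n = v from hn) ▸ hve⟩
      set Sv := {n : ℕ | ∃ e, ch n = some e ∧ v ∈ e} with hSv
      have hψ : ∀ m : ↥Sv, ∃ e, ch m.1 = some e ∧ v ∈ e := fun m => m.2
      set ψ : ↥Sv → {e : Sym2 V // e ∈ {e | ∃ n, ch n = some e} ∧ v ∈ e} :=
        fun m => ⟨Classical.choose (hψ m),
          ⟨m.1, (Classical.choose_spec (hψ m)).1⟩, (Classical.choose_spec (hψ m)).2⟩ with hψdef
      have hinj : Function.Injective ψ := by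
        rintro ⟨a, ha⟩ ⟨b, hb⟩ hab
        have hea := (Classical.choose_spec (hψ ⟨a, ha⟩)).1
        have heb := (Classical.choose_spec (hψ ⟨b, hb⟩)).1
        have heq : Classical.choose (hψ ⟨a, ha⟩) = Classical.choose (hψ ⟨b, hb⟩) := by
          simpa [hψdef] using congrArg Subtype.val hab
        rcases lt_trichotomy a b with hlt | heqab | hlt
        · exact absurd heq (hch_inj a b _ _ hlt hea heb)
        · exact Subtype.ext heqab
        · exact absurd heq.symm (hch_inj b a _ _ hlt heb hea)
      haveI : Infinite ↥Sv := Set.infinite_coe_iff.mpr hSinf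
      have hge : ℵ₀ ≤ deg {e | ∃ n, ch n = some e} v := by
        rw [deg]
        calc ℵ₀ = Cardinal.mk ↥Sv := (Cardinal.mk_eq_aleph0 ↥Sv).symm
          _ ≤ _ := Cardinal.mk_le_of_injective hinj
      have hle : deg {e | ∃ n, ch n = some e} v ≤ ℵ₀ := by
        rw [deg]
        exact Cardinal.mk_le_aleph0
      rw [hfv]
      exact le_antisymm hle hge

end FFactor
end

section
/- The complete bipartite graph K_{ℵ₀,ℵ₁} with f ≡ 1 satisfies property P₄ (every f-factor F and vertex x with d_F(x) < f(x) admits an F-augmenting trail starting at x) but has no perfect f-factor (i.e., no perfect matching). -/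
open Cardinal Set
open scoped Classical

namespace FFactor

variable {V : Type}

section Aux

variable {B : Type}

/-- Edge set of `K_{ℵ₀, B}`. -/
private def KE (B : Type) : Set (Sym2 (ℕ ⊕ B)) :=
  {e : Sym2 (ℕ ⊕ B) | ∃ (a : ℕ) (b : B), e = s(Sum.inl a, Sum.inr b)}

private lemma deg_le_one_elim {V : Type} {F : Set (Sym2 V)} {x : V}
    (h : deg F x ≤ 1) {e e' : Sym2 V} (he : e ∈ F) (hxe : x ∈ e)
    (he' : e' ∈ F) (hxe' : x ∈ e') : e = e' := by
  rw [deg, Cardinal.le_one_iff_subsingleton] at h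
  exact congrArg Subtype.val (h.elim ⟨e, he, hxe⟩ ⟨e', he', hxe'⟩)

private lemma deg_eq_zero {V : Type} {F : Set (Sym2 V)} {x : V}
    (h : ∀ e ∈ F, x ∉ e) : deg F x = 0 := by
  rw [deg, Cardinal.mk_eq_zero_iff]
  exact ⟨fun ⟨e, he, hx⟩ => h e he hx⟩

private lemma one_le_deg {V : Type} {F : Set (Sym2 V)} {x : V}
    {e : Sym2 V} (he : e ∈ F) (hx : x ∈ e) : 1 ≤ deg F x := by
  rw [deg, Cardinal.one_le_iff_ne_zero, Cardinal.mk_ne_zero_iff]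
  exact ⟨e, he, hx⟩

private lemma mem_KE (a : ℕ) (b : B) : s(Sum.inl a, Sum.inr b) ∈ KE B := ⟨a, b, rfl⟩

private lemma mem_KE' (a : ℕ) (b : B) : s(Sum.inr b, Sum.inl a) ∈ KE B :=
  ⟨a, b, Sym2.eq_swap⟩

/-- If each `inl a` has degree ≤ 1 in `F ⊆ KE B` and every `b` is saturated, contradiction. -/
private lemma no_all_sat (hB : Cardinal.mk B = Cardinal.aleph 1)
    {F : Set (Sym2 (ℕ ⊕ B))}
    (hone : ∀ a : ℕ, deg F (Sum.inl a) ≤ 1)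
    (hall : ∀ b : B, ∃ a : ℕ, s(Sum.inl a, Sum.inr b) ∈ F) : False := by
  choose g hg using hall
  have hginj : Function.Injective g := by
    intro b₁ b₂ h
    have heq : s(Sum.inl (g b₁), Sum.inr b₁) = s(Sum.inl (g b₂), Sum.inr b₂) :=
      deg_le_one_elim (hone (g b₁)) (hg b₁) (by simp) (hg b₂) (by simp [h])
    rcases Sym2.eq_iff.mp heq with ⟨-, h2⟩ | ⟨h1, -⟩
    · exact Sum.inr.inj h2
    · exact absurd h1 (by simp)
  have hle : Cardinal.mk B ≤ Cardinal.mk ℕ := Cardinal.mk_le_of_injective hginj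
  rw [hB, Cardinal.mk_nat] at hle
  exact absurd hle (not_le.mpr Cardinal.aleph0_lt_aleph_one)

end Aux
private lemma aug_two {V : Type} {E F : Set (Sym2 V)} {x y : V}
    (hE : s(x, y) ∈ E) (hFxy : s(x, y) ∉ F)
    (hx : deg F x < 1) (hy : deg F y < 1) (hne : x ≠ y) :
    ∃ (k : ℕ∞) (v : ℕ → V), v 0 = x ∧ IsAugTrail E F (fun _ => 1) k v := by
  refine ⟨2, fun i => if i = 0 then x else y, rfl,
    ⟨⟨by norm_num, ?_, ?_⟩, by norm_num, ?_, hx, ?_⟩⟩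
  · intro i hi hik
    have h2 : i < 2 := by exact_mod_cast hik
    have h1 : i = 1 := by omega
    subst h1; simpa using hE
  · intro i j hi hj hik hjk hne' _
    have h2 : i < 2 := by exact_mod_cast hik
    have h3 : j < 2 := by exact_mod_cast hjk
    omega
  · intro i hi hik
    have h2 : i < 2 := by exact_mod_cast hik
    have h1 : i = 1 := by omega
    subst h1
    simpa using iff_of_false hFxy (by decide : ¬ Even 1)
  · exact Or.inr ⟨2, by norm_cast, by decide,
      Or.inl ⟨by simpa using hne, by simpa using hy⟩⟩

/-- `K_{ℵ₀,ℵ₁}` with `f ≡ 1` satisfies `P₄` but has no perfect matching. -/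
theorem statement_8 (B : Type) (hB : Cardinal.mk B = Cardinal.aleph 1) :
    P4 (ℕ ⊕ B) {e : Sym2 (ℕ ⊕ B) | ∃ (a : ℕ) (b : B), e = s(Sum.inl a, Sum.inr b)}
      (fun _ => 1) ∧
    ¬ ∃ F, IsPerfect
      {e : Sym2 (ℕ ⊕ B) | ∃ (a : ℕ) (b : B), e = s(Sum.inl a, Sum.inr b)} F
      (fun (_ : ℕ ⊕ B) => 1) := by
  have hBne : Nonempty B := by
    rw [← Cardinal.mk_ne_zero_iff, hB]
    exact (Cardinal.aleph0_pos.trans Cardinal.aleph0_lt_aleph_one).ne'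
  obtain ⟨b₀⟩ := hBne
  constructor
  · -- P4
    refine ⟨⟨?_, ?_⟩, ?_⟩
    · rintro e ⟨a, b, rfl⟩
      simp [Sym2.mk_isDiag_iff]
    · rintro (a | b)
      · exact one_le_deg (e := s(Sum.inl a, Sum.inr b₀)) ⟨a, b₀, rfl⟩ (by simp)
      · exact one_le_deg (e := s(Sum.inl 0, Sum.inr b)) ⟨0, b, rfl⟩ (by simp)
    · rintro F ⟨hFE, hdeg⟩ x hx
      simp only at hx
      have hx0 : deg F x = 0 := Cardinal.lt_one_iff_zero.mp hx
      -- There is an unsaturated b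
      obtain ⟨b, hb⟩ : ∃ b : B, ∀ a : ℕ, s(Sum.inl a, Sum.inr b) ∉ F := by
        by_contra h
        push_neg at h
        exact no_all_sat hB (fun a => by simpa using hdeg (Sum.inl a)) h
      have unsat_deg : ∀ b : B, (∀ a : ℕ, s(Sum.inl a, Sum.inr b) ∉ F) →
          deg F (Sum.inr b) = 0 := by
        intro b' hb'
        apply deg_eq_zero
        rintro e he hmem
        obtain ⟨a, b'', rfl⟩ := hFE he
        rcases Sym2.mem_iff.mp hmem with h | h
        · exact absurd h (by simp)
        · obtain rfl := Sum.inr.inj h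
          exact hb' a he
      rcases x with a | bx
      · -- x = inl a : two-step trail to unsaturated b
        refine aug_two ?_ (hb a) hx (by rw [unsat_deg b hb]; exact one_pos) (by simp)
        exact ⟨a, b, rfl⟩
      · -- x = inr bx
        have hbx : ∀ a : ℕ, s(Sum.inl a, Sum.inr bx) ∉ F := by
          intro a hmem
          have := one_le_deg hmem (by simp : Sum.inr bx ∈ _)
          rw [hx0] at this
          exact absurd this (by norm_num)
        by_cases hsat : ∀ a : ℕ, ∃ b' : B, s(Sum.inl a, Sum.inr b') ∈ F
        · -- every inl a is saturated : infinite trail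
          choose m hm using hsat
          have hm_inj : Function.Injective m := by
            intro a₁ a₂ h
            have heq := deg_le_one_elim (by simpa using hdeg (Sum.inr (m a₁)))
              (hm a₁) (by simp) (hm a₂) (by simp [h])
            rcases Sym2.eq_iff.mp heq with ⟨h1, -⟩ | ⟨h1, -⟩
            · exact Sum.inl.inj h1
            · exact absurd h1 (by simp)
          set v : ℕ → ℕ ⊕ B := fun i =>
            if i = 0 then Sum.inr bx
            else if Even (i - 1) then Sum.inl ((i - 1) / 2)
            else Sum.inr (m ((i - 1) / 2)) with hv
          have hv0 : v 0 = Sum.inr bx := rfl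
          have hvodd : ∀ j, v (2 * j + 1) = Sum.inl j := by
            intro j
            have h1 : 2 * j + 1 - 1 = 2 * j := by omega
            have h2 : Even (2 * j) := even_two_mul j
            simp [hv, h1, h2, Nat.mul_div_cancel_left]
          have hveven : ∀ j, v (2 * j + 2) = Sum.inr (m j) := by
            intro j
            have h1 : 2 * j + 2 - 1 = 2 * j + 1 := by omega
            have h2 : ¬ Even (2 * j + 1) := by rw [Nat.even_iff]; omega
            have h3 : (2 * j + 1) / 2 = j := by omega
            simp [hv, h1, h2, h3]
          have hvE : ∀ j, v (2 * j) = Sum.inr (if j = 0 then bx else m (j - 1)) := by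
            intro j
            rcases Nat.eq_zero_or_pos j with rfl | hj
            · simpa using hv0
            · have h1 : 2 * j = 2 * (j - 1) + 2 := by omega
              rw [h1, hveven, if_neg (by omega)]
          have hodd_notF : ∀ j, s(Sum.inr (if j = 0 then bx else m (j - 1)), Sum.inl j) ∉ F := by
            intro j hmem
            rcases Nat.eq_zero_or_pos j with rfl | hj
            · rw [if_pos rfl] at hmem
              exact hbx 0 (by rwa [Sym2.eq_swap] at hmem)
            · rw [if_neg (by omega)] at hmem
              have h2 : s(Sum.inl j, Sum.inr (m (j - 1))) ∈ F := by
                rwa [Sym2.eq_swap] at hmem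
              have heq := deg_le_one_elim (by simpa using hdeg (Sum.inr (m (j - 1))))
                (hm (j - 1)) (by simp) h2 (by simp)
              rcases Sym2.eq_iff.mp heq with ⟨h1, -⟩ | ⟨h1, -⟩
              · have := Sum.inl.inj h1; omega
              · exact absurd h1 (by simp)
          -- decomposition of indices
          have hidx : ∀ i : ℕ, 0 < i → (∃ j, i = 2 * j + 1) ∨ (∃ j, i = 2 * j + 2) := by
            intro i hi
            rcases Nat.even_or_odd i with h | h
            · rw [Nat.even_iff] at h
              exact Or.inr ⟨i / 2 - 1, by omega⟩
            · rw [Nat.odd_iff] at h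
              exact Or.inl ⟨i / 2, by omega⟩
          have hedge_odd : ∀ j, s(v (2 * j + 1 - 1), v (2 * j + 1)) =
              s(Sum.inr (if j = 0 then bx else m (j - 1)), Sum.inl j) := by
            intro j
            have h1 : 2 * j + 1 - 1 = 2 * j := by omega
            rw [h1, hvE, hvodd]
          have hedge_even : ∀ j, s(v (2 * j + 2 - 1), v (2 * j + 2)) =
              s(Sum.inl j, Sum.inr (m j)) := by
            intro j
            have h1 : 2 * j + 2 - 1 = 2 * j + 1 := by omega
            rw [h1, hvodd, hveven]
          have hbx_ne_m : ∀ j, bx ≠ m j := by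
            intro j h
            exact hbx j (h ▸ hm j)
          refine ⟨⊤, v, hv0, ⟨⟨le_top, ?_, ?_⟩, lt_top_iff_ne_top.mpr (by simp), ?_, ?_, Or.inl rfl⟩⟩
          · -- edges in E
            intro i hi _
            rcases hidx i hi with ⟨j, rfl⟩ | ⟨j, rfl⟩
            · rw [hedge_odd]
              exact ⟨j, _, Sym2.eq_swap⟩
            · rw [hedge_even]
              exact hFE (hm j)
          · -- distinct edges
            intro i i' hi hi' _ _ hne heq
            have key : ∀ j j' : ℕ,
                s(Sum.inr (if j = 0 then bx else m (j - 1)), Sum.inl j) =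
                s(Sum.inl j', Sum.inr (m j')) → False := by
              intro j j' h
              rcases Sym2.eq_iff.mp h with ⟨h1, -⟩ | ⟨h1, h2⟩
              · exact absurd h1 (by simp)
              · obtain rfl := Sum.inl.inj h2
                have h3 := Sum.inr.inj h1
                rcases Nat.eq_zero_or_pos j with rfl | hj
                · rw [if_pos rfl] at h3
                  exact hbx_ne_m 0 h3
                · rw [if_neg (by omega)] at h3
                  have := hm_inj h3
                  omega
            rcases hidx i hi with ⟨j, rfl⟩ | ⟨j, rfl⟩ <;>
              rcases hidx i' hi' with ⟨j', rfl⟩ | ⟨j', rfl⟩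
            · rw [hedge_odd, hedge_odd] at heq
              rcases Sym2.eq_iff.mp heq with ⟨-, h2⟩ | ⟨h1, -⟩
              · have := Sum.inl.inj h2; omega
              · exact absurd h1 (by simp)
            · rw [hedge_odd, hedge_even] at heq
              exact key j j' heq
            · rw [hedge_even, hedge_odd] at heq
              exact key j' j heq.symm
            · rw [hedge_even, hedge_even] at heq
              rcases Sym2.eq_iff.mp heq with ⟨h1, -⟩ | ⟨h1, -⟩
              · have := Sum.inl.inj h1; omega
              · exact absurd h1 (by simp)
          · -- alternation
            intro i hi _
            rcases hidx i hi with ⟨j, rfl⟩ | ⟨j, rfl⟩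
            · rw [hedge_odd]
              exact iff_of_false (hodd_notF j) (by rw [Nat.even_iff]; omega)
            · rw [hedge_even]
              exact iff_of_true (hm j) (by rw [Nat.even_iff]; omega)
          · -- start unsaturated
            rw [hv0]
            exact hx
        · -- some inl a unsaturated : two-step trail
          push_neg at hsat
          obtain ⟨a, ha⟩ := hsat
          have hadeg : deg F (Sum.inl a) = 0 := by
            apply deg_eq_zero
            rintro e he hmem
            obtain ⟨a', b'', rfl⟩ := hFE he
            rcases Sym2.mem_iff.mp hmem with h | h
            · obtain rfl := Sum.inl.inj h
              exact ha b'' he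
            · exact absurd h (by simp)
          have hEmem : s(Sum.inr bx, Sum.inl a) ∈
              {e : Sym2 (ℕ ⊕ B) | ∃ (a : ℕ) (b : B), e = s(Sum.inl a, Sum.inr b)} :=
            ⟨a, bx, Sym2.eq_swap⟩
          refine aug_two hEmem ?_ hx (by rw [hadeg]; exact one_pos) (by simp)
          intro hmem
          exact hbx a (by rwa [Sym2.eq_swap] at hmem)
  · -- no perfect matching
    rintro ⟨F, hsub, hdeg⟩
    apply no_all_sat hB (fun a => (by simpa using hdeg (Sum.inl a) : deg F (Sum.inl a) = 1).le)
    intro b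
    have h1 : deg F (Sum.inr b) = 1 := by simpa using hdeg (Sum.inr b)
    have h2 : (1 : Cardinal) ≤ deg F (Sum.inr b) := h1.ge
    rw [deg, Cardinal.one_le_iff_ne_zero, Cardinal.mk_ne_zero_iff] at h2
    obtain ⟨⟨e, he, hmem⟩⟩ := h2
    obtain ⟨a, b', rfl⟩ := hsub he
    rcases Sym2.mem_iff.mp hmem with h | h
    · exact absurd h (by simp)
    · obtain rfl := Sum.inr.inj h
      exact ⟨a, he⟩

end FFactor
end

section
/- (Transfer Lemma) Let P be a property that is necessary for the existence of a perfect f-factor (i.e., whenever a graph H has a perfect g-factor with (H,g) ∈ C, then P(H,g) holds). Let (G,f) ∈ C with |V(G)| = κ⁺ for an infinite cardinal κ. If G possesses a perfect f-factor, then (G,f) is not P-destructed. -/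
open Cardinal Set
open scoped Classical

namespace FFactor

variable {V : Type}

-- AUX LEMMAS

lemma deg_mono {F F' : Set (Sym2 V)} (h : F ⊆ F') (x : V) : deg F x ≤ deg F' x :=
  Cardinal.mk_subtype_mono fun e he => ⟨h he.1, he.2⟩

lemma deg_induced {S : Set V} {F : Set (Sym2 V)} (h : ∀ e ∈ F, ∀ z ∈ e, z ∈ S) (x : ↥S) :
    deg (inducedE S F) x = deg F x.1 := by
  have hinj : Function.Injective (Sym2.map (Subtype.val : ↥S → V)) :=
    Sym2.map.injective Subtype.val_injective
  refine Cardinal.mk_congr (Equiv.ofBijective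
    (fun e => ⟨(e.1).map Subtype.val, e.2.1, Sym2.mem_map.2 ⟨x, e.2.2, rfl⟩⟩) ⟨?_, ?_⟩)
  · rintro ⟨e₁, h₁⟩ ⟨e₂, h₂⟩ he
    exact Subtype.ext (hinj (congrArg Subtype.val he))
  · rintro ⟨e, he, hx⟩
    induction e using Sym2.ind with
    | _ a b =>
      have ha : a ∈ S := h _ he a (by simp)
      have hb : b ∈ S := h _ he b (by simp)
      have hmap : Sym2.map (Subtype.val : ↥S → V) s(⟨a, ha⟩, ⟨b, hb⟩) = s(a, b) := by
        simp [Sym2.map_pair_eq]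
      refine ⟨⟨s(⟨a, ha⟩, ⟨b, hb⟩), ?_, ?_⟩, ?_⟩
      · show Sym2.map _ _ ∈ F
        rw [hmap]; exact he
      · rcases Sym2.mem_iff.1 hx with h' | h'
        · exact Sym2.mem_iff.2 (Or.inl (Subtype.ext h'))
        · exact Sym2.mem_iff.2 (Or.inr (Subtype.ext h'))
      · exact Subtype.ext hmap

lemma isDiag_of_map {W : Type} {g : V → W} {e : Sym2 V} (h : e.IsDiag) :
    (e.map g).IsDiag := by
  induction e using Sym2.ind with
  | _ a b =>
    rw [Sym2.mk_isDiag_iff] at h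
    rw [Sym2.map_pair_eq, Sym2.mk_isDiag_iff, h]

/-- endpoints of subE edges lie in subV -/
lemma subE_endpoints {E : Set (Sym2 V)} {f : V → Cardinal} {c : Cardinal} {A : Set V} :
    ∀ e ∈ subE E f c A, ∀ z ∈ e, z ∈ subV f c A := by
  rintro e ⟨heE, x, y, rfl, hx, hy⟩ z hz
  rcases Sym2.mem_iff.1 hz with rfl | rfl
  · exact hx
  · exact Or.inl hy

lemma good_step {E F : Set (Sym2 V)} {f : V → Cardinal} {c : Cardinal}
    (hc : ℵ₀ ≤ c) (hF : IsPerfect E F f) (hfle : ∀ y, f y ≤ c)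
    (A : Set V) (hA : Cardinal.mk A < c)
    (hclosed : ∀ y ∈ A, f y < c → ∀ z, s(y, z) ∈ F → f z ≠ c → z ∈ A) :
    ∃ F', IsPerfect (inducedE (subV f c A) (subE E f c A)) F'
      (fun x : ↥(subV f c A) => f x.1) := by
  set S := subV f c A with hS
  set Keep := F ∩ subE E f c A with hK
  have hKsub : ∀ e ∈ Keep, ∀ z ∈ e, z ∈ S := fun e he => subE_endpoints e he.2
  -- basic membership
  have keep_mem : ∀ x ∈ S, ∀ y, s(x, y) ∈ F → y ∉ A → s(x, y) ∈ subE E f c A :=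
    fun x hx y hxy hy => ⟨hF.1 hxy, x, y, rfl, hx, hy⟩
  -- key degree computation
  have hdegKeep : ∀ x ∈ S, deg Keep x = f x := by
    intro x hx
    by_cases hxc : f x = c
    · -- high degree case
      refine le_antisymm (le_trans (deg_mono inter_subset_left x) (le_of_eq (hF.2 x))) ?_
      by_contra hlt
      push_neg at hlt
      rw [hxc] at hlt
      have hbad : Cardinal.mk {e : Sym2 V // e ∈ F ∧ x ∈ e ∧ e ∉ subE E f c A} ≤
          Cardinal.mk A := by
        refine Cardinal.mk_le_of_injective (f := fun e =>
          (⟨Sym2.Mem.other e.2.2.1, ?_⟩ : A)) ?_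
        · by_contra hmem
          exact e.2.2.2 (by
            have := keep_mem x hx (Sym2.Mem.other e.2.2.1) (by
              rw [Sym2.other_spec e.2.2.1]; exact e.2.1) hmem
            rwa [Sym2.other_spec e.2.2.1] at this)
        · rintro ⟨e₁, h₁⟩ ⟨e₂, h₂⟩ he
          have := congrArg Subtype.val he
          simp only at this
          apply Subtype.ext
          show e₁ = e₂
          calc e₁ = s(x, Sym2.Mem.other h₁.2.1) := (Sym2.other_spec h₁.2.1).symm
            _ = s(x, Sym2.Mem.other h₂.2.1) := by rw [this]
            _ = e₂ := Sym2.other_spec h₂.2.1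
      have hsplit : deg F x ≤ deg Keep x + Cardinal.mk
          {e : Sym2 V // e ∈ F ∧ x ∈ e ∧ e ∉ subE E f c A} := by
        refine le_trans (Cardinal.mk_subtype_mono (q := fun e =>
          e ∈ ({e | e ∈ Keep ∧ x ∈ e} ∪ {e | e ∈ F ∧ x ∈ e ∧ e ∉ subE E f c A}) ) ?_)
          (Cardinal.mk_union_le _ _)
        intro e he
        by_cases hE : e ∈ subE E f c A
        · exact Or.inl ⟨⟨he.1, hE⟩, he.2⟩
        · exact Or.inr ⟨he.1, he.2, hE⟩
      have : c < c := by
        calc c = f x := hxc.symm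
        _ = deg F x := (hF.2 x).symm
        _ ≤ deg Keep x + Cardinal.mk A := le_trans hsplit (add_le_add le_rfl hbad)
        _ < c := Cardinal.add_lt_of_lt hc hlt hA
      exact absurd this (lt_irrefl c)
    · -- low degree case: all incident F-edges kept
      have hxA : x ∉ A := by
        rcases hx with hx | hx
        · exact hx
        · exact absurd hx hxc
      have hall : ∀ e ∈ F, x ∈ e → e ∈ subE E f c A := by
        intro e he hxe
        set y := Sym2.Mem.other hxe with hy
        have hexy : s(x, y) = e := Sym2.other_spec hxe
        rw [← hexy] at he ⊢
        by_cases hyA : y ∈ A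
        · by_cases hyc : f y = c
          · exact ⟨hF.1 he, y, x, Sym2.eq_swap.symm, Or.inr hyc, hxA⟩
          · have hylt : f y < c := lt_of_le_of_ne (hfle y) hyc
            have : x ∈ A := hclosed y hyA hylt x (by rwa [Sym2.eq_swap]) hxc
            exact absurd this hxA
        · exact keep_mem x hx y he hyA
      have : deg Keep x = deg F x := by
        refine le_antisymm (deg_mono inter_subset_left x) ?_
        exact Cardinal.mk_subtype_mono fun e he => ⟨⟨he.1, hall e he.1 he.2⟩, he.2⟩
      rw [this, hF.2 x]
  refine ⟨inducedE S Keep, ?_, ?_⟩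
  · intro e he
    exact he.2
  · intro x
    rw [deg_induced hKsub x]
    exact hdegKeep x.1 x.2


/-- Transfer Lemma, Lemma 4. -/
theorem statement_9 (P : GraphProp)
    (hnec : ∀ (W : Type) (E' : Set (Sym2 W)) (g : W → Cardinal),
      inC E' g → (∃ F, IsPerfect E' F g) → P W E' g)
    (V : Type) (E : Set (Sym2 V)) (f : V → Cardinal) (hC : inC E f)
    (κ : Cardinal) (hκ : ℵ₀ ≤ κ) (hV : Cardinal.mk V = Order.succ κ)
    (hperf : ∃ F, IsPerfect E F f) :
    ¬ PDestructed P E f (Order.succ κ) := by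
  rintro ⟨A, hmono, hcard, hcont, huniv, hstat⟩
  obtain ⟨F, hF⟩ := hperf
  set c := Order.succ κ with hcdef
  have hc0 : ℵ₀ ≤ c := le_trans hκ (le_of_lt (Order.lt_succ κ))
  have hcof : c.ord.cof = c := (Cardinal.isRegular_succ hκ).cof_eq
  have hκc : κ < c := Order.lt_succ κ
  have hfle : ∀ y, f y ≤ c := by
    intro y
    have h1 : deg F y ≤ Cardinal.mk V :=
      Cardinal.mk_le_of_injective (f := fun e : {e : Sym2 V // e ∈ F ∧ y ∈ e} =>
        Sym2.Mem.other e.2.2) (by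
          rintro ⟨e₁, h₁⟩ ⟨e₂, h₂⟩ he
          simp only at he
          apply Subtype.ext
          show e₁ = e₂
          calc e₁ = s(y, Sym2.Mem.other h₁.2) := (Sym2.other_spec h₁.2).symm
            _ = s(y, Sym2.Mem.other h₂.2) := by rw [he]
            _ = e₂ := Sym2.other_spec h₂.2)
    calc f y = deg F y := (hF.2 y).symm
      _ ≤ Cardinal.mk V := h1
      _ = c := hV
  -- neighbor sets
  set N : V → Set V := fun y => {z | s(y, z) ∈ F ∧ f z ≠ c} with hNdef
  have hN : ∀ y, f y < c → Cardinal.mk (N y) ≤ κ := by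
    intro y hy
    have h1 : Cardinal.mk (N y) ≤ deg F y :=
      Cardinal.mk_le_of_injective (f := fun z : ↥(N y) =>
        (⟨s(y, z.1), z.2.1, Sym2.mem_iff.2 (Or.inl rfl)⟩ :
          {e : Sym2 V // e ∈ F ∧ y ∈ e})) (by
        rintro ⟨z₁, h₁⟩ ⟨z₂, h₂⟩ he
        have := congrArg Subtype.val he
        simp only at this
        exact Subtype.ext (Sym2.congr_right.1 this))
    have := lt_of_le_of_lt h1 (by rw [hF.2 y]; exact hy)
    exact Order.lt_succ_iff.1 this
  -- the club set
  set Cset : Set Ordinal := {α | α < c.ord ∧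
    ∀ y ∈ A α, f y < c → ∀ z, s(y, z) ∈ F → f z ≠ c → z ∈ A α} with hCsetdef
  -- step lemma
  have step : ∀ γ < c.ord, ∃ β, β < c.ord ∧ γ < β ∧
      ∀ y ∈ A γ, f y < c → N y ⊆ A β := by
    intro γ hγ
    set s : Set V := {y | y ∈ A γ ∧ f y < c} with hsdef
    set B : Set V := ⋃ y ∈ s, N y with hBdef
    have hBκ : Cardinal.mk B ≤ κ := by
      refine le_trans (Cardinal.mk_biUnion_le N s) ?_
      have h1 : Cardinal.mk s ≤ κ :=
        le_trans (Cardinal.mk_subtype_mono fun y hy => hy.1)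
          (Order.lt_succ_iff.1 (hcard γ hγ))
      have h2 : (⨆ y : ↥s, Cardinal.mk (N y.1)) ≤ κ := by
        rcases isEmpty_or_nonempty ↥s with hs | hs
        · simp [ciSup_of_empty]
        · exact ciSup_le' fun y => hN y.1 y.2.2
      calc Cardinal.mk s * (⨆ y : ↥s, Cardinal.mk (N y.1)) ≤ κ * κ :=
            mul_le_mul' h1 h2
        _ = κ := Cardinal.mul_eq_self hκ
    have hmem : ∀ z : ↥B, ∃ i : Set.Iio c.ord, z.1 ∈ A i.1 := by
      intro z
      have : z.1 ∈ ⋃ α : Set.Iio c.ord, A α.1 := by rw [huniv]; trivial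
      exact Set.mem_iUnion.1 this
    set idx : ↥B → Set.Iio c.ord := fun z => Classical.choose (hmem z) with hidx
    have hidx_spec : ∀ z : ↥B, z.1 ∈ A (idx z).1 := fun z => Classical.choose_spec (hmem z)
    set β0 : Ordinal := ⨆ z : ↥B, (idx z).1 with hβ0
    have hβ0lt : β0 < c.ord := by
      refine Ordinal.iSup_lt_ord ?_ fun z => (idx z).2
      rw [hcof]
      exact lt_of_le_of_lt hBκ hκc
    refine ⟨max (Order.succ γ) β0, ?_, ?_, ?_⟩
    · exact max_lt ((Cardinal.isSuccLimit_ord hc0).succ_lt hγ) hβ0lt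
    · exact lt_of_lt_of_le (Order.lt_succ γ) (le_max_left _ _)
    · intro y hy hylt z hz
      have hzB : z ∈ B := Set.mem_biUnion (show y ∈ s from ⟨hy, hylt⟩) hz
      have h1 : z ∈ A (idx ⟨z, hzB⟩).1 := hidx_spec ⟨z, hzB⟩
      refine hmono (idx ⟨z, hzB⟩).1 (idx ⟨z, hzB⟩).2 _ ?_
        (max_lt ((Cardinal.isSuccLimit_ord hc0).succ_lt hγ) hβ0lt) h1
      exact le_trans (Ordinal.le_iSup (fun z : ↥B => (idx z).1) ⟨z, hzB⟩)
        (le_max_right _ _)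
  -- Cset is a club
  have hclub : IsClubIn Cset c.ord := by
    refine ⟨fun α hα => hα.1, ?_, ?_⟩
    · -- unbounded
      intro a ha
      have step' : ∀ γ : {o : Ordinal // o < c.ord}, ∃ β : {o : Ordinal // o < c.ord},
          γ.1 < β.1 ∧ ∀ y ∈ A γ.1, f y < c → N y ⊆ A β.1 := by
        intro γ
        obtain ⟨β, hβ1, hβ2, hβ3⟩ := step γ.1 γ.2
        exact ⟨⟨β, hβ1⟩, hβ2, hβ3⟩
      set g : ℕ → {o : Ordinal // o < c.ord} := fun n =>
        Nat.rec ⟨a, ha⟩ (fun _ p => Classical.choose (step' p)) n with hgdef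
      have hg : ∀ n, (g n).1 < (g (n + 1)).1 ∧
          ∀ y ∈ A (g n).1, f y < c → N y ⊆ A (g (n + 1)).1 :=
        fun n => Classical.choose_spec (step' (g n))
      set b : Ordinal := ⨆ n, (g n).1 with hbdef
      have hble : ∀ n, (g n).1 ≤ b := fun n => Ordinal.le_iSup (fun n => (g n).1) n
      have hb : b < c.ord := by
        refine Ordinal.iSup_lt_ord ?_ fun n => (g n).2
        rw [hcof, Cardinal.mk_nat]
        exact lt_of_le_of_lt hκ hκc
      have hbub : ∀ β < b, ∃ n, β < (g n).1 := by
        intro β hβ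
        by_contra h
        push_neg at h
        exact absurd (ciSup_le' h : b ≤ β) (not_le.2 hβ)
      have hblim : Order.IsSuccLimit b := by
        refine Ordinal.isSuccLimit_iff.2 ⟨?_, Order.isSuccPrelimit_of_succ_lt ?_⟩
        · have : (0 : Ordinal) < b :=
            lt_of_le_of_lt zero_le (lt_of_lt_of_le (hg 0).1 (hble 1))
          exact pos_iff_ne_zero.1 this
        · intro β hβ
          obtain ⟨n, hn⟩ := hbub β hβ
          exact lt_of_le_of_lt (Order.succ_le_of_lt hn)
            (lt_of_lt_of_le (hg n).1 (hble (n + 1)))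
      refine ⟨b, ⟨hb, ?_⟩, hble 0⟩
      intro y hy hylt z hzF hzc
      rw [hcont b hb hblim] at hy
      obtain ⟨t, ⟨⟨β, hβ⟩, rfl⟩, hyA⟩ := hy
      obtain ⟨n, hn⟩ := hbub β hβ
      have hy' : y ∈ A (g n).1 :=
        hmono β (lt_trans hβ hb) _ (le_of_lt hn) (g n).2 hyA
      have hz : z ∈ A (g (n + 1)).1 := (hg n).2 y hy' hylt ⟨hzF, hzc⟩
      rw [hcont b hb hblim]
      exact Set.mem_iUnion.2 ⟨⟨(g (n + 1)).1, lt_of_lt_of_le (hg (n + 1)).1 (hble (n + 2))⟩, hz⟩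
    · -- closed
      intro a ha hne hsup
      have key : ∀ β < a, ∃ γ, γ ∈ Cset ∩ Set.Iio a ∧ β < γ := by
        intro β hβ
        by_contra h
        push_neg at h
        have : sSup (Cset ∩ Set.Iio a) ≤ β := csSup_le hne fun γ hγ => h γ hγ
        rw [hsup] at this
        exact absurd hβ (not_lt.2 this)
      have halim : Order.IsSuccLimit a := by
        obtain ⟨γ0, hγ0⟩ := hne
        refine Ordinal.isSuccLimit_iff.2 ⟨?_, Order.isSuccPrelimit_of_succ_lt ?_⟩
        · exact pos_iff_ne_zero.1 (lt_of_le_of_lt zero_le hγ0.2)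
        · intro β hβ
          obtain ⟨γ, hγ, hβγ⟩ := key β hβ
          exact lt_of_le_of_lt (Order.succ_le_of_lt hβγ) hγ.2
      refine ⟨ha, ?_⟩
      intro y hy hylt z hzF hzc
      rw [hcont a ha halim] at hy
      obtain ⟨t, ⟨⟨β, hβ⟩, rfl⟩, hyA⟩ := hy
      obtain ⟨γ, hγ, hβγ⟩ := key β hβ
      have hy' : y ∈ A γ :=
        hmono β (lt_trans hβ ha) γ (le_of_lt hβγ) (lt_trans hγ.2 ha) hyA
      have hz : z ∈ A γ := hγ.1.2 y hy' hylt z hzF hzc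
      exact hmono γ (lt_trans hγ.2 ha) a (le_of_lt hγ.2) ha hz
  -- derive the contradiction
  obtain ⟨α, hαS, hαC⟩ := hstat Cset hclub
  obtain ⟨hαlt, hnP⟩ := hαS
  apply hnP
  have hperf' := good_step hc0 hF hfle (A α) (hcard α hαlt) hαC.2
  refine hnec _ _ _ ⟨?_, ?_⟩ hperf'
  · intro e he hdiag
    exact hC.1 _ he.1 (isDiag_of_map hdiag)
  · intro x
    obtain ⟨F', hF'⟩ := hperf'
    calc f x.1 = deg F' x := (hF'.2 x).symm
      _ ≤ deg (inducedE (subV f c (A α)) (subE E f c (A α))) x := deg_mono hF'.1 x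

end FFactor
end

section
/- Let κ be an infinite cardinal and (G,f) ∈ C with |V(G)| = κ⁺. Then G possesses a perfect f-factor if and only if there is an increasing continuous sequence (A_α)_{α<κ⁺} of subsets of V(G) such that: (i) A₀ = ∅ and V(G) = ⋃_{α<κ⁺} A_α; (ii) |A_{α+1} \ A_α| = κ for all α < κ⁺; (iii) for all α < κ⁺ there exists a κ-perfect g_α-factor of the graph (B_α, {{x,y} ∈ E : x ∈ B_α, y ∈ A_{α+1} \ A_α}), where B_α = A_{α+1} \ (A_α \ f⁻¹(κ⁺)) and g_α = f ↾ B_α. -/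
open Cardinal Set
open scoped Classical

namespace FFactor

variable {V : Type}

section Aux
variable {V : Type}


/-- neighbor set -/
def Nb (F : Set (Sym2 V)) (x : V) : Set V := {y | s(x, y) ∈ F}

lemma mem_Nb {F : Set (Sym2 V)} {x y : V} : y ∈ Nb F x ↔ s(x, y) ∈ F := Iff.rfl

lemma deg_eq_nb (F : Set (Sym2 V)) (x : V) : deg F x = #(Nb F x) := by
  apply Cardinal.mk_congr
  refine (Equiv.ofBijective (fun y => ⟨s(x, y.1), y.2, Sym2.mem_mk_left x y.1⟩) ⟨?_, ?_⟩).symm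
  · rintro ⟨a, ha⟩ ⟨b, hb⟩ h
    simp only [Subtype.mk.injEq, Sym2.congr_right] at h
    exact Subtype.ext h
  · rintro ⟨e, he, hx⟩
    obtain ⟨y, rfl⟩ := Sym2.mem_iff_exists.mp hx
    exact ⟨⟨y, he⟩, rfl⟩

lemma deg_le_mkV (F : Set (Sym2 V)) (x : V) : deg F x ≤ #V := by
  rw [deg_eq_nb]; exact Cardinal.mk_le_mk_of_subset (Set.subset_univ _) |>.trans (by simp)

lemma deg_pos {F : Set (Sym2 V)} {x y : V} (h : s(x, y) ∈ F) : 0 < deg F x := by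
  rw [deg_eq_nb]
  rw [pos_iff_ne_zero]
  rw [Ne, Cardinal.mk_eq_zero_iff]
  exact fun he => he.elim ⟨y, h⟩

/-- comparing degree in an induced-type graph with an ambient graph -/
lemma deg_le_of {S : Set V} (G' : Set (Sym2 ↥S)) (F : Set (Sym2 V)) (x : ↥S)
    (h1 : ∀ y : ↥S, s(x, y) ∈ G' → s(x.1, y.1) ∈ F) : deg G' x ≤ deg F x.1 := by
  rw [deg_eq_nb, deg_eq_nb]
  refine Cardinal.mk_le_of_injective (f := fun y => ⟨y.1.1, h1 y.1 y.2⟩) ?_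
  rintro ⟨⟨a, _⟩, _⟩ ⟨⟨b, _⟩, _⟩ h
  simp only [Subtype.mk.injEq] at h
  exact Subtype.ext (Subtype.ext (Subtype.mk.inj h))

lemma deg_eq_of {S : Set V} (G' : Set (Sym2 ↥S)) (F : Set (Sym2 V)) (x : ↥S)
    (h1 : ∀ y : ↥S, s(x, y) ∈ G' ↔ s(x.1, y.1) ∈ F)
    (h2 : ∀ y : V, s(x.1, y) ∈ F → y ∈ S) : deg G' x = deg F x.1 := by
  rw [deg_eq_nb, deg_eq_nb]
  apply Cardinal.mk_congr
  refine Equiv.ofBijective (fun y => ⟨y.1.1, (h1 y.1).mp y.2⟩) ⟨?_, ?_⟩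
  · rintro ⟨⟨a, _⟩, _⟩ ⟨⟨b, _⟩, _⟩ h
    simp only [Subtype.mk.injEq] at h
    exact Subtype.ext (Subtype.ext (Subtype.mk.inj h))
  · rintro ⟨y, hy⟩
    exact ⟨⟨⟨y, h2 y hy⟩, (h1 _).mpr hy⟩, rfl⟩

-- drop dup Nb

section Closure
variable (κ : Cardinal) (F : Set (Sym2 V)) (f : V → Cardinal)

noncomputable def pick (F : Set (Sym2 V)) (A : Set V) (x : V) : V :=
  if h : (Nb F x \ A).Nonempty then h.some else x

lemma pick_mem {F : Set (Sym2 V)} {A : Set V} {x : V} (h : (Nb F x \ A).Nonempty) :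
    pick F A x ∈ Nb F x \ A := by
  rw [pick, dif_pos h]; exact h.some_mem

noncomputable def Tstep (A S : Set V) : Set V :=
  S ∪ (⋃ x ∈ {x ∈ S | f x ≤ κ}, Nb F x) ∪ (pick F A) '' {x ∈ S | ¬ f x ≤ κ}

noncomputable def Cl (A S : Set V) : Set V := ⋃ n : ℕ, (Tstep κ F f A)^[n] S

lemma subset_Tstep (A S : Set V) : S ⊆ Tstep κ F f A S := by
  intro x hx; exact Or.inl (Or.inl hx)

lemma iterate_subset_Cl (A S : Set V) (n : ℕ) : (Tstep κ F f A)^[n] S ⊆ Cl κ F f A S :=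
  Set.subset_iUnion (fun n => (Tstep κ F f A)^[n] S) n

lemma subset_Cl (A S : Set V) : S ⊆ Cl κ F f A S := iterate_subset_Cl κ F f A S 0

lemma Cl_small {A S : Set V} {x : V} (hx : x ∈ Cl κ F f A S) (hsm : f x ≤ κ) :
    Nb F x ⊆ Cl κ F f A S := by
  obtain ⟨_, ⟨n, rfl⟩, hn⟩ := hx
  refine subset_trans ?_ (iterate_subset_Cl κ F f A S (n + 1))
  rw [Function.iterate_succ_apply']
  intro y hy
  exact Or.inl (Or.inr (Set.mem_biUnion ⟨hn, hsm⟩ hy))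

lemma Cl_big {A S : Set V} {x : V} (hx : x ∈ Cl κ F f A S) (hbig : ¬ f x ≤ κ) :
    pick F A x ∈ Cl κ F f A S := by
  obtain ⟨_, ⟨n, rfl⟩, hn⟩ := hx
  refine iterate_subset_Cl κ F f A S (n + 1) ?_
  rw [Function.iterate_succ_apply']
  exact Or.inr (Set.mem_image_of_mem _ ⟨hn, hbig⟩)

lemma card_Cl (hκ : ℵ₀ ≤ κ) (hnb : ∀ x : V, f x ≤ κ → #(Nb F x) ≤ κ)
    {A S : Set V} (hS : #S ≤ κ) : #(Cl κ F f A S) ≤ κ := by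
  have hstep : ∀ T : Set V, #T ≤ κ → #(Tstep κ F f A T) ≤ κ := by
    intro T hT
    have h1 : #(⋃ x ∈ {x ∈ T | f x ≤ κ}, Nb F x) ≤ κ := by
      refine (Cardinal.mk_biUnion_le _ _).trans ?_
      by_cases hne : Nonempty {x : V // x ∈ {x ∈ T | f x ≤ κ}}
      · have hsup : ⨆ x : {x : V // x ∈ {x ∈ T | f x ≤ κ}}, #(Nb F x.1) ≤ κ :=
          ciSup_le' fun x => hnb x.1 x.2.2
        calc #({x ∈ T | f x ≤ κ} : Set V) * ⨆ x : {x : V // x ∈ {x ∈ T | f x ≤ κ}}, #(Nb F x.1)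
            ≤ κ * κ := by
              refine mul_le_mul' ?_ hsup
              exact (Cardinal.mk_le_mk_of_subset (Set.sep_subset _ _)).trans hT
          _ = κ := Cardinal.mul_eq_self hκ
      · have : #({x ∈ T | f x ≤ κ} : Set V) = 0 := by
          rw [Cardinal.mk_eq_zero_iff]; exact not_nonempty_iff.mp hne
        rw [this, zero_mul]; exact κ.zero_le
    have h2 : #((pick F A) '' {x ∈ T | ¬ f x ≤ κ}) ≤ κ :=
      (Cardinal.mk_image_le).trans ((Cardinal.mk_le_mk_of_subset (Set.sep_subset _ _)).trans hT)
    have := (Cardinal.mk_union_le (T ∪ (⋃ x ∈ {x ∈ T | f x ≤ κ}, Nb F x))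
      ((pick F A) '' {x ∈ T | ¬ f x ≤ κ}))
    refine this.trans ?_
    have := (Cardinal.mk_union_le T (⋃ x ∈ {x ∈ T | f x ≤ κ}, Nb F x))
    calc #(T ∪ ⋃ x ∈ {x ∈ T | f x ≤ κ}, Nb F x : Set V) + #((pick F A) '' {x ∈ T | ¬ f x ≤ κ})
        ≤ (κ + κ) + κ := by
          refine add_le_add (this.trans (add_le_add hT h1)) h2
      _ = κ := by rw [Cardinal.add_eq_self hκ, Cardinal.add_eq_self hκ]
  have hiter : ∀ n : ℕ, #((Tstep κ F f A)^[n] S) ≤ κ := by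
    intro n; induction n with
    | zero => exact hS
    | succ n ih => rw [Function.iterate_succ_apply']; exact hstep _ ih
  refine (Cardinal.mk_iUnion_le _).trans ?_
  have hsup : ⨆ n : ℕ, #((Tstep κ F f A)^[n] S) ≤ κ := ciSup_le' hiter
  calc #ℕ * ⨆ n : ℕ, #((Tstep κ F f A)^[n] S) ≤ κ * κ := by
        refine mul_le_mul' ?_ hsup; rw [Cardinal.mk_nat]; exact hκ
    _ = κ := Cardinal.mul_eq_self hκ

end Closure

section Chain
variable (κ : Cardinal) (F : Set (Sym2 V)) (f : V → Cardinal)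

noncomputable def padset (κ : Cardinal) (A : Set V) : Set V :=
  if h : ∃ P : Set V, P ⊆ Aᶜ ∧ #P = κ then h.choose else ∅

lemma padset_card_le (κ : Cardinal) (A : Set V) : #(padset κ A) ≤ κ := by
  rw [padset]
  split
  · next h => exact le_of_eq h.choose_spec.2
  · simp

lemma padset_spec {κ : Cardinal} {A : Set V} (h : κ ≤ #(Aᶜ : Set V)) :
    padset κ A ⊆ Aᶜ ∧ #(padset κ A) = κ := by
  obtain ⟨P, hP, hcard⟩ := Cardinal.le_mk_iff_exists_subset.mp h
  rw [padset, dif_pos ⟨P, hP, hcard⟩]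
  exact (Exists.choose_spec (⟨P, hP, hcard⟩ : ∃ P : Set V, P ⊆ Aᶜ ∧ #P = κ))

noncomputable def seed (enum : Ordinal → V) (β : Ordinal) (A : Set V) : Set V :=
  {enum β} ∪ padset κ A ∪ {x ∈ A | ¬ f x ≤ κ}


lemma seed_card_le (enum : Ordinal → V) (hκ : ℵ₀ ≤ κ) {A : Set V} (hA : #A ≤ κ)
    (β : Ordinal) : #(seed κ f enum β A) ≤ κ := by
  rw [seed]
  refine (Cardinal.mk_union_le _ _).trans ?_
  have h1 : #({enum β} ∪ padset κ A : Set V) ≤ κ := by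
    refine (Cardinal.mk_union_le _ _).trans ?_
    have hone : #({enum β} : Set V) ≤ κ := by
      simpa using (Cardinal.one_le_aleph0.trans hκ)
    calc #({enum β} : Set V) + #(padset κ A) ≤ κ + κ :=
          add_le_add hone (padset_card_le κ _)
      _ = κ := Cardinal.add_eq_self hκ
  have h2 : #({x ∈ A | ¬ f x ≤ κ} : Set V) ≤ κ :=
    (Cardinal.mk_le_mk_of_subset (Set.sep_subset _ _)).trans hA
  calc _ ≤ κ + κ := add_le_add h1 h2
    _ = κ := Cardinal.add_eq_self hκ

noncomputable def chain (enum : Ordinal → V) : Ordinal → Set V := fun α =>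
  Ordinal.limitRecOn α ∅
    (fun β Aβ => Aβ ∪ Cl κ F f Aβ (seed κ f enum β Aβ))
    (fun β _ ih => ⋃ γ : Set.Iio β, ih γ.1 γ.2)

variable (enum : Ordinal → V)

lemma chain_zero : chain κ F f enum 0 = ∅ := Ordinal.limitRecOn_zero _ _ _

lemma chain_succ (β : Ordinal) : chain κ F f enum (Order.succ β) =
    chain κ F f enum β ∪
      Cl κ F f (chain κ F f enum β) (seed κ f enum β (chain κ F f enum β)) :=
  Ordinal.limitRecOn_succ _ _ _ _

lemma chain_limit (β : Ordinal) (h : Order.IsSuccLimit β) :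
    chain κ F f enum β = ⋃ γ : Set.Iio β, chain κ F f enum γ.1 :=
  Ordinal.limitRecOn_limit _ _ _ _ h

lemma chain_mono : ∀ β, ∀ α ≤ β, chain κ F f enum α ⊆ chain κ F f enum β := by
  intro β
  induction β using Ordinal.induction with
  | _ β IH =>
    intro α hαβ
    rcases eq_or_lt_of_le hαβ with rfl | hlt
    · exact subset_rfl
    rcases Ordinal.zero_or_succ_or_isSuccLimit β with rfl | ⟨γ, rfl⟩ | hβ
    · exact absurd hlt (not_lt_of_ge (zero_le (a := α)))
    · rw [chain_succ]
      exact (IH γ (Order.lt_succ γ) α (Order.lt_succ_iff.mp hlt)).trans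
        Set.subset_union_left
    · rw [chain_limit κ F f enum β hβ]
      exact Set.subset_iUnion (fun γ : Set.Iio β => chain κ F f enum γ.1) ⟨α, hlt⟩

/-- closure property of the chain -/
lemma chain_good : ∀ α, ∀ x ∈ chain κ F f enum α, f x ≤ κ →
    Nb F x ⊆ chain κ F f enum α := by
  intro α
  induction α using Ordinal.induction with
  | _ α IH =>
    rcases Ordinal.zero_or_succ_or_isSuccLimit α with rfl | ⟨γ, rfl⟩ | hα
    · rw [chain_zero]; intro x hx; exact absurd hx (Set.notMem_empty x)
    · rw [chain_succ]
      rintro x (hx | hx) hsm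
      · exact (IH γ (Order.lt_succ γ) x hx hsm).trans Set.subset_union_left
      · exact (Cl_small κ F f hx hsm).trans Set.subset_union_right
    · rw [chain_limit κ F f enum α hα]
      rintro x hx hsm
      obtain ⟨s, ⟨⟨γ, hγ⟩, rfl⟩, hxs⟩ := hx
      exact (IH γ hγ x hxs hsm).trans
        (Set.subset_iUnion (fun γ : Set.Iio α => chain κ F f enum γ.1) ⟨γ, hγ⟩)

/-- cardinality bound of the chain -/
lemma chain_card (c : Cardinal) (hκ : ℵ₀ ≤ κ)
    (hnb : ∀ x : V, f x ≤ κ → #(Nb F x) ≤ κ) (hc : c = Order.succ κ) :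
    ∀ α < c.ord, #(chain κ F f enum α) ≤ κ := by
  intro α
  induction α using Ordinal.induction with
  | _ α IH =>
    intro hα
    rcases Ordinal.zero_or_succ_or_isSuccLimit α with rfl | ⟨γ, rfl⟩ | hlim
    · rw [chain_zero]; simp
    · rw [chain_succ]
      have hγ : γ < c.ord := (Order.lt_succ γ).trans hα
      have hAγ := IH γ (Order.lt_succ γ) hγ
      refine (Cardinal.mk_union_le _ _).trans ?_
      have hseed : #(seed κ f enum γ (chain κ F f enum γ)) ≤ κ :=
        seed_card_le κ f enum hκ hAγ γ
      have hcl : #(Cl κ F f (chain κ F f enum γ) (seed κ f enum γ (chain κ F f enum γ))) ≤ κ :=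
        card_Cl κ F f hκ hnb hseed
      calc _ ≤ κ + κ := add_le_add hAγ hcl
        _ = κ := Cardinal.add_eq_self hκ
    · rw [chain_limit κ F f enum α hlim]
      have hcard : α.card ≤ κ := by
        have h1 := Cardinal.lt_ord.mp hα
        rw [hc] at h1
        exact Order.lt_succ_iff.mp h1
      rw [← Cardinal.lift_le.{1}]
      refine (Cardinal.mk_iUnion_le_lift _).trans ?_
      have hsup : ⨆ γ : Set.Iio α, Cardinal.lift.{1} #(chain κ F f enum γ.1) ≤
          Cardinal.lift.{1} κ := by
        by_cases hne : Nonempty (Set.Iio α)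
        · exact ciSup_le' fun γ => Cardinal.lift_le.mpr
            (IH γ.1 γ.2 (γ.2.trans hα))
        · haveI := not_nonempty_iff.mp hne
          rw [ciSup_of_empty]
          exact bot_le
      have hIio : Cardinal.lift.{0} #(Set.Iio α) ≤ Cardinal.lift.{1} κ := by
        rw [Cardinal.lift_uzero, Ordinal.mk_Iio_ordinal]
        exact Cardinal.lift_le.mpr hcard
      calc Cardinal.lift.{0} #(Set.Iio α) *
            (⨆ γ : Set.Iio α, Cardinal.lift.{1} #(chain κ F f enum γ.1))
          ≤ Cardinal.lift.{1} κ * Cardinal.lift.{1} κ := mul_le_mul' hIio hsup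
        _ = Cardinal.lift.{1} κ := by
          rw [← Cardinal.lift_mul, Cardinal.mul_eq_self hκ]

end Chain

lemma forward (κ : Cardinal) (hκ : ℵ₀ ≤ κ) (V : Type)
    (E : Set (Sym2 V)) (f : V → Cardinal)
    (hC : inC E f) (hV : Cardinal.mk V = Order.succ κ)
    (F : Set (Sym2 V)) (hF : IsPerfect E F f) :
    ∃ A : Ordinal → Set V,
        A 0 = ∅ ∧
        (∀ α < (Order.succ κ).ord, ∀ β, α ≤ β → β < (Order.succ κ).ord → A α ⊆ A β) ∧
        (∀ α < (Order.succ κ).ord, Order.IsSuccLimit α → A α = ⋃ β : Set.Iio α, A β.1) ∧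
        (⋃ α : Set.Iio (Order.succ κ).ord, A α.1) = Set.univ ∧
        (∀ α < (Order.succ κ).ord, Cardinal.mk ↥(A (α + 1) \ A α) = κ) ∧
        (∀ α < (Order.succ κ).ord,
          ∃ F : Set (Sym2 ↥(A (α + 1) \ (A α \ {x | f x = Order.succ κ}))),
            IsKPerfect κ
              (inducedE (A (α + 1) \ (A α \ {x | f x = Order.succ κ}))
                {e ∈ E | ∃ x y, e = s(x, y) ∧
                  x ∈ A (α + 1) \ (A α \ {x | f x = Order.succ κ}) ∧
                  y ∈ A (α + 1) \ A α})
              F (fun x => f x.1)) := by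
  have hκc : κ < Order.succ κ := Order.lt_succ κ
  have hc0 : ℵ₀ ≤ Order.succ κ := hκ.trans (Order.le_succ κ)
  haveI : Infinite V := Cardinal.infinite_iff.mpr (by rw [hV]; exact hc0)
  have hlimo : Order.IsSuccLimit ((Order.succ κ).ord) := Cardinal.isSuccLimit_ord hc0
  obtain ⟨g⟩ : Nonempty ((Order.succ κ).ord.ToType ≃ V) := by
    rw [← Cardinal.eq, Cardinal.mk_toType, Cardinal.card_ord, hV]
  set enum : Ordinal → V := fun α =>
    if h : α < (Order.succ κ).ord then g ((Ordinal.ToType.mk (o := (Order.succ κ).ord)) ⟨α, h⟩)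
    else Classical.arbitrary V with henumdef
  have enum_surj : ∀ x : V, ∃ α, ∃ _ : α < (Order.succ κ).ord, enum α = x := by
    intro x
    refine ⟨((Ordinal.ToType.mk (o := (Order.succ κ).ord)).symm (g.symm x)).1,
      ((Ordinal.ToType.mk (o := (Order.succ κ).ord)).symm (g.symm x)).2, ?_⟩
    rw [henumdef]
    simp only [dif_pos ((Ordinal.ToType.mk (o := (Order.succ κ).ord)).symm (g.symm x)).2,
      Subtype.coe_eta, OrderIso.apply_symm_apply, Equiv.apply_symm_apply]
    rw [dif_pos (show _ < (Order.succ κ).ord from ((Ordinal.ToType.mk (o := (Order.succ κ).ord)).symm (g.symm x)).2)]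
    simp only [Subtype.coe_eta, OrderIso.apply_symm_apply, Equiv.apply_symm_apply]
  have hnb : ∀ x : V, f x ≤ κ → #(Nb F x) ≤ κ := by
    intro x hx; rw [← deg_eq_nb, hF.2 x]; exact hx
  have hdegf : ∀ x : V, #(Nb F x) = f x := by
    intro x; rw [← deg_eq_nb, hF.2 x]
  have hfc : ∀ x, f x ≤ Order.succ κ := fun x => (hC.2 x).trans ((deg_le_mkV E x).trans_eq hV)
  have hbig : ∀ x, ¬ f x ≤ κ → f x = Order.succ κ := fun x h =>
    le_antisymm (hfc x) (Order.succ_le_of_lt (not_le.mp h))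
  set A : Ordinal → Set V := chain κ F f enum with hA
  have hcard : ∀ α < (Order.succ κ).ord, #(A α) ≤ κ :=
    chain_card κ F f enum (Order.succ κ) hκ hnb rfl
  have hcompl : ∀ α < (Order.succ κ).ord, κ ≤ #((A α)ᶜ : Set V) := by
    intro α hα
    have h1 : #(A α) < #V := by
      rw [hV]; exact lt_of_le_of_lt (hcard α hα) hκc
    rw [mk_compl_of_infinite _ h1, hV]
    exact (Order.le_succ κ)
  have hAsucc : ∀ α, A (α + 1) =
      A α ∪ Cl κ F f (A α) (seed κ f enum α (A α)) := by
    intro α; rw [hA, Ordinal.add_one_eq_succ]; exact chain_succ κ F f enum α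
  have hGood : ∀ α, ∀ x ∈ A α, f x ≤ κ → Nb F x ⊆ A α := chain_good κ F f enum
  refine ⟨A, chain_zero κ F f enum,
    fun α _ β hab _ => chain_mono κ F f enum β α hab,
    fun α _ h => chain_limit κ F f enum α h, ?_, ?_, ?_⟩
  · -- union is everything
    ext x
    simp only [Set.mem_iUnion, Set.mem_univ, iff_true]
    obtain ⟨α, hα, hx⟩ := enum_surj x
    refine ⟨⟨α + 1, ?_⟩, ?_⟩
    · rw [Ordinal.add_one_eq_succ]; exact hlimo.succ_lt hα
    · rw [hAsucc α]
      right
      apply subset_Cl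
      rw [seed]
      exact Or.inl (Or.inl (by rw [hx]; exact Set.mem_singleton x))
  · -- size of the new sets
    intro α hα
    obtain ⟨hpadsub, hpadcard⟩ := padset_spec (hcompl α hα)
    refine le_antisymm ?_ ?_
    · have hsub : A (α + 1) \ A α ⊆ Cl κ F f (A α) (seed κ f enum α (A α)) := by
        intro x hx
        rcases (hAsucc α ▸ hx.1) with h | h
        · exact absurd h hx.2
        · exact h
      refine (Cardinal.mk_le_mk_of_subset hsub).trans ?_
      exact card_Cl κ F f hκ hnb (seed_card_le κ f enum hκ (hcard α hα) α)
    · rw [← hpadcard]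
      refine Cardinal.mk_le_mk_of_subset ?_
      intro x hx
      refine ⟨?_, hpadsub hx⟩
      rw [hAsucc α]
      right
      apply subset_Cl
      rw [seed]
      exact Or.inl (Or.inr hx)
  · -- the κ-perfect factors
    intro α hα
    set big : Set V := {x | f x = Order.succ κ} with hbigdef
    set B : Set V := A (α + 1) \ (A α \ big) with hBdef
    set new : Set V := A (α + 1) \ A α with hnewdef
    set blockE : Set (Sym2 V) := {e ∈ E | ∃ x y, e = s(x, y) ∧ x ∈ B ∧ y ∈ new}
      with hblockEdef
    set F' : Set (Sym2 ↥B) :=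
      {e | Sym2.map Subtype.val e ∈ F ∧ Sym2.map Subtype.val e ∈ blockE} with hF'def
    have hBnew : ∀ x, x ∈ new → x ∈ B := fun x hx => ⟨hx.1, fun h => hx.2 h.1⟩
    have hBsmall : ∀ x ∈ B, f x ≤ κ → x ∈ new := by
      intro x hx hsm
      refine ⟨hx.1, fun hmem => hx.2 ⟨hmem, fun hbigx => ?_⟩⟩
      rw [hbigdef] at hbigx
      exact absurd (hbigx ▸ hsm) (not_le.mpr hκc)
    refine ⟨F', ⟨⟨fun e he => he.2, ?_⟩, ?_, ?_⟩⟩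
    · -- degree at most f
      intro x
      refine (deg_le_of F' F x ?_).trans (le_of_eq (hF.2 x.1))
      intro y hy
      have := hy.1
      rwa [Sym2.map_pair_eq] at this
    · -- small vertices have full degree
      intro x hsm
      have hx_new : x.1 ∈ new := hBsmall x.1 x.2 hsm
      refine (deg_eq_of F' F x ?_ ?_).trans (hF.2 x.1)
      · intro y
        constructor
        · intro h; have := h.1; rwa [Sym2.map_pair_eq] at this
        · intro h
          refine ⟨?_, ?_⟩ <;> rw [Sym2.map_pair_eq]
          · exact h
          · exact ⟨hF.1 h, y.1, x.1, Sym2.eq_swap, y.2, hx_new⟩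
      · intro y hy
        have hyA : y ∈ A (α + 1) := hGood (α + 1) x.1 x.2.1 hsm hy
        by_cases hyα : y ∈ A α
        · refine ⟨hyA, fun hmem => hmem.2 ?_⟩
          have hysm : f y ≤ κ := by
            by_contra hbg
            exact hmem.2 (hbig y hbg)
          exact absurd (hGood α y hyα hysm (show s(y, x.1) ∈ F by rwa [Sym2.eq_swap]))
            (fun hmem2 => hx_new.2 hmem2)
        · exact hBnew y ⟨hyA, hyα⟩
    · -- big vertices have positive degree
      intro x hbx
      have hnle : ¬ f x.1 ≤ κ := not_le.mpr hbx
      have hxcl : x.1 ∈ Cl κ F f (A α) (seed κ f enum α (A α)) := by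
        have hx1 : x.1 ∈ A (α + 1) := x.2.1
        rw [hAsucc α] at hx1
        rcases hx1 with h | h
        · apply subset_Cl
          rw [seed]
          exact Or.inr ⟨h, hnle⟩
        · exact h
      have hne : (Nb F x.1 \ A α).Nonempty := by
        by_contra h
        rw [Set.not_nonempty_iff_eq_empty, Set.diff_eq_empty] at h
        have h2 : f x.1 ≤ κ := by
          calc f x.1 = #(Nb F x.1) := (hdegf x.1).symm
            _ ≤ #(A α) := Cardinal.mk_le_mk_of_subset h
            _ ≤ κ := hcard α hα
        exact hnle h2
      have hy := pick_mem hne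
      have hycl : pick F (A α) x.1 ∈ Cl κ F f (A α) (seed κ f enum α (A α)) :=
        Cl_big κ F f hxcl hnle
      have hynew : pick F (A α) x.1 ∈ new :=
        ⟨by rw [hAsucc α]; exact Or.inr hycl, hy.2⟩
      have hedge : s(x, (⟨pick F (A α) x.1, hBnew _ hynew⟩ : ↥B)) ∈ F' := by
        refine ⟨?_, ?_⟩ <;> rw [Sym2.map_pair_eq]
        · exact hy.1
        · exact ⟨hF.1 hy.1, x.1, pick F (A α) x.1, rfl, x.2, hynew⟩
      exact deg_pos hedge

lemma backward (κ : Cardinal) (hκ : ℵ₀ ≤ κ) (V : Type)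
    (E : Set (Sym2 V)) (f : V → Cardinal)
    (hC : inC E f) (hV : Cardinal.mk V = Order.succ κ)
    (A : Ordinal → Set V)
    (h0 : A 0 = ∅)
    (hmono : ∀ α < (Order.succ κ).ord, ∀ β, α ≤ β → β < (Order.succ κ).ord → A α ⊆ A β)
    (hlim : ∀ α < (Order.succ κ).ord, Order.IsSuccLimit α → A α = ⋃ β : Set.Iio α, A β.1)
    (hcover : (⋃ α : Set.Iio (Order.succ κ).ord, A α.1) = Set.univ)
    (hfac : ∀ α < (Order.succ κ).ord,
      ∃ F : Set (Sym2 ↥(A (α + 1) \ (A α \ {x | f x = Order.succ κ}))),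
        IsKPerfect κ
          (inducedE (A (α + 1) \ (A α \ {x | f x = Order.succ κ}))
            {e ∈ E | ∃ x y, e = s(x, y) ∧
              x ∈ A (α + 1) \ (A α \ {x | f x = Order.succ κ}) ∧
              y ∈ A (α + 1) \ A α})
          F (fun x => f x.1)) :
    ∃ F, IsPerfect E F f := by
  have hκc : κ < Order.succ κ := Order.lt_succ κ
  have hc0 : ℵ₀ ≤ Order.succ κ := hκ.trans (Order.le_succ κ)
  have hlimo : Order.IsSuccLimit ((Order.succ κ).ord) := Cardinal.isSuccLimit_ord hc0
  set o : Ordinal := (Order.succ κ).ord with hodef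
  set B : Ordinal → Set V := fun α => A (α + 1) \ (A α \ {x | f x = Order.succ κ})
    with hBdef
  set nw' : Ordinal → Set V := fun α => A (α + 1) \ A α with hnwdef
  set blockE : Ordinal → Set (Sym2 V) := fun α =>
    {e ∈ E | ∃ x y, e = s(x, y) ∧ x ∈ B α ∧ y ∈ nw' α} with hblockEdef
  have hfac' : ∀ α < o, ∃ F : Set (Sym2 ↥(B α)),
      IsKPerfect κ (inducedE (B α) (blockE α)) F (fun x => f x.1) := hfac
  classical
  choose! FF hFF using hfac'
  -- the global factor
  set F : Set (Sym2 V) :=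
    {e | ∃ α, ∃ hα : α < o, e ∈ Sym2.map Subtype.val '' (FF α)} with hFdef
  -- the successor stays below o
  have hsucclt : ∀ {α : Ordinal}, α < o → α + 1 < o := by
    intro α hα
    rw [Ordinal.add_one_eq_succ]
    exact hlimo.succ_lt hα
  -- disjointness of the new parts
  have newdisj : ∀ {x : V} {α β : Ordinal}, α < o → β < o →
      x ∈ nw' α → x ∈ nw' β → α = β := by
    have key : ∀ {x : V} {α β : Ordinal}, α < o → β < o →
        x ∈ nw' α → x ∈ nw' β → α < β → False := by
      intro x α β hα hβ hxα hxβ hlt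
      have h1 : α + 1 ≤ β := by
        rw [Ordinal.add_one_eq_succ]; exact Order.succ_le_of_lt hlt
      exact hxβ.2 (hmono (α + 1) (hsucclt hα) β h1 hβ hxα.1)
    intro x α β hα hβ hxα hxβ
    rcases lt_trichotomy α β with h | h | h
    · exact absurd (key hα hβ hxα hxβ h) not_false
    · exact h
    · exact absurd (key hβ hα hxβ hxα h) not_false
  -- structure of edges of F
  have estrut : ∀ e ∈ F, ∃ α, ∃ hα : α < o, ∃ a b : V, ∃ ha : a ∈ B α, ∃ hb : b ∈ B α,
      e = s(a, b) ∧ s((⟨a, ha⟩ : ↥(B α)), (⟨b, hb⟩ : ↥(B α))) ∈ FF α ∧ e ∈ blockE α := by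
    rintro e ⟨α, hα, e', he', rfl⟩
    induction e' using Sym2.ind with
    | _ p q =>
      refine ⟨α, hα, p.1, q.1, p.2, q.2, ?_, ?_, ?_⟩
      · rw [Sym2.map_pair_eq]
      · convert he' <;> exact Subtype.eta _ _
      · have := (hFF α hα).1.1 he'
        rwa [inducedE, Set.mem_setOf_eq] at this
  have hFE : F ⊆ E := by
    intro e he
    obtain ⟨α, hα, a, b, ha, hb, rfl, hFF', hbl⟩ := estrut e he
    exact hbl.1
  -- membership of edges of FF in F
  have hmemF : ∀ {α : Ordinal} (hα : α < o) (p q : ↥(B α)),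
      s(p, q) ∈ FF α → s(p.1, q.1) ∈ F := by
    intro α hα p q h
    exact ⟨α, hα, s(p, q), h, Sym2.map_pair_eq _ _ _⟩
  -- the "new at" stage of each vertex
  have hnwex : ∀ x : V, ∃ δ, δ < o ∧ x ∈ A (δ + 1) ∧ x ∉ A δ := by
    intro x
    have hx : ∃ γ, γ < o ∧ x ∈ A γ := by
      have := hcover ▸ Set.mem_univ x
      obtain ⟨_, ⟨⟨γ, hγ⟩, rfl⟩, hmem⟩ := (hcover ▸ Set.mem_univ x : x ∈ _)
      exact ⟨γ, hγ, hmem⟩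
    set S : Set Ordinal := {γ | γ < o ∧ x ∈ A γ} with hSdef
    have hSne : S.Nonempty := hx
    have hmemS : sInf S ∈ S := csInf_mem hSne
    rcases Ordinal.zero_or_succ_or_isSuccLimit (sInf S) with hz | ⟨δ, hδ⟩ | hl
    · have h2 : x ∈ A 0 := by rw [← hz]; exact hmemS.2
      rw [h0] at h2
      exact absurd h2 (Set.notMem_empty x)
    · refine ⟨δ, ?_, ?_, ?_⟩
      · exact lt_of_lt_of_le (by rw [← hδ]; exact Order.lt_succ δ) (le_of_lt hmemS.1)
      · rw [Ordinal.add_one_eq_succ, hδ]; exact hmemS.2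
      · intro hmem
        have hδS : δ ∈ S := ⟨(lt_of_lt_of_le (by rw [← hδ]; exact Order.lt_succ δ)
          (le_of_lt hmemS.1)), hmem⟩
        have := csInf_le' hδS
        rw [← hδ] at this
        exact absurd this (not_le.mpr (Order.lt_succ δ))
    · exfalso
      have h2 := hmemS.2
      rw [hlim (sInf S) hmemS.1 hl] at h2
      obtain ⟨_, ⟨⟨β, hβ⟩, rfl⟩, hmem⟩ := h2
      have hβS : β ∈ S := ⟨hβ.trans hmemS.1, hmem⟩
      exact absurd (csInf_le' hβS) (not_le.mpr hβ)
  choose nw hnw1 hnw2 hnw3 using hnwex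
  have hxnew : ∀ x : V, x ∈ nw' (nw x) := fun x => ⟨hnw2 x, hnw3 x⟩
  have hxB : ∀ x : V, x ∈ B (nw x) := fun x => ⟨hnw2 x, fun h => hnw3 x h.1⟩
  have hfc : ∀ x, f x ≤ Order.succ κ := fun x => (hC.2 x).trans ((deg_le_mkV E x).trans_eq hV)
  have hbig : ∀ x, ¬ f x ≤ κ → f x = Order.succ κ := fun x h =>
    le_antisymm (hfc x) (Order.succ_le_of_lt (not_le.mp h))
  -- localization of edges at small vertices
  have hloc : ∀ x : V, f x ≤ κ → ∀ y : V, s(x, y) ∈ F →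
      ∃ hB : y ∈ B (nw x),
        s((⟨x, hxB x⟩ : ↥(B (nw x))), (⟨y, hB⟩ : ↥(B (nw x)))) ∈ FF (nw x) := by
    intro x hsm y hy
    obtain ⟨α, hα, a, b, ha, hb, heq, hFF', hbl⟩ := estrut s(x, y) hy
    have hxBα : x ∈ B α ∧ α = nw x → True := fun _ => trivial
    have hkey : ∀ (hxB' : x ∈ B α), α = nw x := by
      intro hxB'
      have hxnewα : x ∈ nw' α := by
        refine ⟨hxB'.1, fun hmem => ?_⟩
        have : f x = Order.succ κ := by
          by_contra hne
          exact (hxB'.2 ⟨hmem, hne⟩)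
        exact absurd (this ▸ hsm) (not_le.mpr hκc)
      exact newdisj hα (hnw1 x) hxnewα (hxnew x)
    rcases Sym2.eq_iff.mp heq with ⟨rfl, rfl⟩ | ⟨rfl, rfl⟩
    · obtain rfl := hkey ha
      exact ⟨hb, hFF'⟩
    · obtain rfl := hkey hb
      refine ⟨ha, ?_⟩
      rw [Sym2.eq_swap]
      exact hFF'
  -- degree at small vertices
  have hsmalldeg : ∀ x : V, f x ≤ κ → deg F x = f x := by
    intro x hsm
    have h := deg_eq_of (FF (nw x)) F (⟨x, hxB x⟩ : ↥(B (nw x))) ?_ ?_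
    · rw [← h]
      exact (hFF (nw x) (hnw1 x)).2.1 ⟨x, hxB x⟩ hsm
    · intro y
      constructor
      · intro hyF
        exact hmemF (hnw1 x) _ _ hyF
      · intro hyF
        obtain ⟨hB, hFF'⟩ := hloc x hsm y.1 hyF
        have : (⟨y.1, hB⟩ : ↥(B (nw x))) = y := Subtype.ext rfl
        rwa [this] at hFF'
    · intro y hy
      obtain ⟨hB, _⟩ := hloc x hsm y hy
      exact hB
  -- degree at big vertices
  have hbigdeg : ∀ x : V, f x = Order.succ κ → deg F x = f x := by
    intro x hfx
    refine le_antisymm (by rw [hfx, ← hV]; exact deg_le_mkV F x) ?_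
    -- for each stage beyond nw x there is an edge to a fresh vertex
    have hmem : ∀ β, β < o → nw x < β → ∃ y, y ∈ nw' β ∧ s(x, y) ∈ F := by
      intro β hβ hgt
      have hxAβ : x ∈ A β := by
        have h1 : nw x + 1 ≤ β := by
          rw [Ordinal.add_one_eq_succ]; exact Order.succ_le_of_lt hgt
        exact hmono (nw x + 1) (hsucclt (hnw1 x)) β h1 hβ (hnw2 x)
      have hxBβ : x ∈ B β := by
        refine ⟨hmono β hβ (β + 1) (le_of_lt (by
          rw [Ordinal.add_one_eq_succ]; exact Order.lt_succ β)) (hsucclt hβ) hxAβ,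
          fun hmem => hmem.2 hfx⟩
      have hpos : 0 < deg (FF β) (⟨x, hxBβ⟩ : ↥(B β)) :=
        (hFF β hβ).2.2 ⟨x, hxBβ⟩ (show κ < f x by rw [hfx]; exact hκc)
      rw [deg_eq_nb] at hpos
      rw [pos_iff_ne_zero, Ne, Cardinal.mk_eq_zero_iff, not_isEmpty_iff] at hpos
      obtain ⟨⟨z, hz⟩⟩ := hpos
      have hblE : s(x, z.1) ∈ blockE β := by
        have := (hFF β hβ).1.1 hz
        rw [inducedE, Set.mem_setOf_eq, Sym2.map_pair_eq] at this
        exact this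
      obtain ⟨_, a, b, heq, haB, hbnew⟩ := hblE
      have hzF : s(x, z.1) ∈ F := hmemF hβ _ _ hz
      rcases Sym2.eq_iff.mp heq with ⟨rfl, rfl⟩ | ⟨rfl, rfl⟩
      · exact ⟨z.1, hbnew, hzF⟩
      · exfalso
        exact (not_lt.mpr (le_of_eq (newdisj hβ (hnw1 x) hbnew (hxnew x)))) hgt
    choose yf hy1 hy2 using hmem
    -- build an injection from a tail of ordinals into the neighbourhood of x
    set D : Set Ordinal := {β | nw x < β ∧ β < o} with hDdef
    have hemb : Nonempty (↥D ↪ ↥(Nb F x)) := by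
      refine ⟨⟨fun β => ⟨yf β.1 β.2.2 β.2.1, hy2 β.1 β.2.2 β.2.1⟩, ?_⟩⟩
      intro β γ h
      have h1 : yf β.1 β.2.2 β.2.1 = yf γ.1 γ.2.2 γ.2.1 := congrArg Subtype.val h
      have h2 := hy1 β.1 β.2.2 β.2.1
      have h3 := hy1 γ.1 γ.2.2 γ.2.1
      rw [h1] at h2
      exact Subtype.ext (newdisj β.2.2 γ.2.2 h2 h3)
    have hlift : Cardinal.lift.{1} (Order.succ κ) ≤ Cardinal.lift.{1} #(Nb F x) := by
      have hD : Cardinal.lift.{1} (Order.succ κ) ≤ Cardinal.lift.{0} #(↥D) := by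
        by_contra hcon
        push_neg at hcon
        have hsplit : Set.Iio o ⊆ D ∪ Set.Iic (nw x) := by
          intro β hβ
          rcases le_or_gt β (nw x) with h | h
          · exact Or.inr h
          · exact Or.inl ⟨h, hβ⟩
        have hIic : #(Set.Iic (nw x)) < Cardinal.lift.{1} (Order.succ κ) := by
          have : Set.Iic (nw x) = Set.Iio (nw x + 1) := by
            ext β
            simp only [Set.mem_Iic, Set.mem_Iio, Ordinal.add_one_eq_succ, Order.lt_succ_iff]
          rw [this, Ordinal.mk_Iio_ordinal]
          rw [Cardinal.lift_lt]
          exact Cardinal.lt_ord.mp (hsucclt (hnw1 x))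
        have hIio : #(Set.Iio o) = Cardinal.lift.{1} (Order.succ κ) := by
          rw [Ordinal.mk_Iio_ordinal, hodef, Cardinal.card_ord]
        have : #(Set.Iio o) < Cardinal.lift.{1} (Order.succ κ) := by
          calc #(Set.Iio o) ≤ #(↥(D ∪ Set.Iic (nw x))) := Cardinal.mk_le_mk_of_subset hsplit
            _ ≤ #(↥D) + #(Set.Iic (nw x)) := Cardinal.mk_union_le _ _
            _ < Cardinal.lift.{1} (Order.succ κ) := by
              refine Cardinal.add_lt_of_lt ?_ ?_ hIic
              · rw [← Cardinal.lift_aleph0.{1,0}, Cardinal.lift_le]; exact hc0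
              · rw [← Cardinal.lift_uzero #(↥D)]; exact hcon
        rw [hIio] at this
        exact absurd this (lt_irrefl _)
      refine hD.trans ?_
      obtain ⟨emb⟩ := hemb
      exact Cardinal.lift_mk_le'.mpr ⟨emb⟩
    rw [Cardinal.lift_le] at hlift
    rw [deg_eq_nb, hfx]
    exact hlift
  refine ⟨F, hFE, fun x => ?_⟩
  rcases le_or_gt (f x) κ with hsm | hbg
  · exact hsmalldeg x hsm
  · exact hbigdeg x (hbig x (not_le.mpr hbg))


end Aux

/-- Theorem 3. -/
theorem statement_13 (κ : Cardinal) (hκ : ℵ₀ ≤ κ) (V : Type)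
    (E : Set (Sym2 V)) (f : V → Cardinal)
    (hC : inC E f) (hV : Cardinal.mk V = Order.succ κ) :
    (∃ F, IsPerfect E F f) ↔
      ∃ A : Ordinal → Set V,
        A 0 = ∅ ∧
        (∀ α < (Order.succ κ).ord, ∀ β, α ≤ β → β < (Order.succ κ).ord → A α ⊆ A β) ∧
        (∀ α < (Order.succ κ).ord, Order.IsSuccLimit α → A α = ⋃ β : Set.Iio α, A β.1) ∧
        (⋃ α : Set.Iio (Order.succ κ).ord, A α.1) = Set.univ ∧
        (∀ α < (Order.succ κ).ord, Cardinal.mk ↥(A (α + 1) \ A α) = κ) ∧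
        (∀ α < (Order.succ κ).ord,
          ∃ F : Set (Sym2 ↥(A (α + 1) \ (A α \ {x | f x = Order.succ κ}))),
            IsKPerfect κ
              (inducedE (A (α + 1) \ (A α \ {x | f x = Order.succ κ}))
                {e ∈ E | ∃ x y, e = s(x, y) ∧
                  x ∈ A (α + 1) \ (A α \ {x | f x = Order.succ κ}) ∧
                  y ∈ A (α + 1) \ A α})
              F (fun x => f x.1)) := by
  constructor
  · rintro ⟨F, hF⟩
    exact forward κ hκ V E f hC hV F hF
  · rintro ⟨A, h0, hmono, hlim, hcover, _hsize, hfac⟩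
    exact backward κ hκ V E f hC hV A h0 hmono hlim hcover hfac

end FFactor
end

section
/- If (G_α)_{α<κ⁺} are pairwise edge-disjoint graphs on subsets of V and F_α is a κ-perfect g_α-factor of G_α for each α (with g_α = f ↾ V(G_α)), where for each vertex x: either f(x) ≤ κ and x belongs to exactly one V(G_α), or f(x) = κ⁺ and x belongs to V(G_β) for all β above some α, then F = ⋃_{α<κ⁺} F_α is a perfect f-factor of G = (V, ⋃_α E(G_α)). -/
open Cardinal Set
open scoped Classical

namespace FFactor

variable {V : Type}

/-- gluing direction of Theorem 3. -/
theorem statement_16 (κ : Cardinal) (hκ : ℵ₀ ≤ κ) (V : Type) (f : V → Cardinal)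
    (Vs : Ordinal → Set V) (Es Fs : Ordinal → Set (Sym2 V))
    (hEV : ∀ α < (Order.succ κ).ord, ∀ e ∈ Es α, ∀ x ∈ e, x ∈ Vs α)
    (hdisj : ∀ α < (Order.succ κ).ord, ∀ β < (Order.succ κ).ord, α ≠ β →
      Es α ∩ Es β = ∅)
    (hFs : ∀ α < (Order.succ κ).ord, Fs α ⊆ Es α ∧
      (∀ x ∈ Vs α, deg (Fs α) x ≤ f x) ∧
      (∀ x ∈ Vs α, f x ≤ κ → deg (Fs α) x = f x) ∧
      (∀ x ∈ Vs α, κ < f x → 0 < deg (Fs α) x))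
    (hvert : ∀ x : V,
      (f x ≤ κ ∧ ∃! α, α < (Order.succ κ).ord ∧ x ∈ Vs α) ∨
      (f x = Order.succ κ ∧ ∃ α₀ < (Order.succ κ).ord,
        ∀ β, α₀ ≤ β → β < (Order.succ κ).ord → x ∈ Vs β)) :
    IsPerfect (⋃ α : Set.Iio (Order.succ κ).ord, Es α.1)
      (⋃ α : Set.Iio (Order.succ κ).ord, Fs α.1) f := by
  set c := Order.succ κ with hc
  have hκc : κ < c := Order.lt_succ κ
  have hℵc : ℵ₀ ≤ c := hκ.trans hκc.le
  constructor
  · exact Set.iUnion_mono fun α => (hFs α.1 α.2).1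
  intro x
  rcases hvert x with ⟨hfx, α, ⟨hα, hxα⟩, huniq⟩ | ⟨hfx, α₀, hα₀, hall⟩
  · -- f x ≤ κ : unique α
    have hset : {e : Sym2 V // e ∈ (⋃ β : Set.Iio c.ord, Fs β.1) ∧ x ∈ e}
        ≃ {e : Sym2 V // e ∈ Fs α ∧ x ∈ e} := by
      apply Equiv.subtypeEquivRight
      intro e
      constructor
      · rintro ⟨he, hxe⟩
        rw [Set.mem_iUnion] at he
        obtain ⟨⟨β, hβ⟩, heβ⟩ := he
        have hβα : β = α := huniq β ⟨hβ, hEV β hβ e ((hFs β hβ).1 heβ) x hxe⟩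
        exact ⟨hβα ▸ heβ, hxe⟩
      · rintro ⟨he, hxe⟩
        exact ⟨Set.mem_iUnion.2 ⟨⟨α, hα⟩, he⟩, hxe⟩
    have hdegeq : deg (⋃ β : Set.Iio c.ord, Fs β.1) x = deg (Fs α) x :=
      Cardinal.mk_congr hset
    rw [hdegeq]
    exact (hFs α hα).2.2.1 x hxα hfx
  · -- f x = c
    rw [hfx]
    have hIioc : #(Set.Iio c.ord) = Cardinal.lift.{1} c := by
      rw [Ordinal.mk_Iio_ordinal, Cardinal.card_ord]
    apply le_antisymm
    · -- upper bound
      have hsub : {e : Sym2 V | e ∈ (⋃ β : Set.Iio c.ord, Fs β.1) ∧ x ∈ e}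
          = ⋃ β : Set.Iio c.ord, {e : Sym2 V | e ∈ Fs β.1 ∧ x ∈ e} := by
        ext e
        simp only [Set.mem_setOf_eq, Set.mem_iUnion]
        constructor
        · rintro ⟨⟨β, hβ⟩, hxe⟩
          exact ⟨β, hβ, hxe⟩
        · rintro ⟨β, hβ, hxe⟩
          exact ⟨⟨β, hβ⟩, hxe⟩
      have hdegβ : ∀ β : Set.Iio c.ord, #{e : Sym2 V | e ∈ Fs β.1 ∧ x ∈ e} ≤ c := by
        rintro ⟨β, hβ⟩
        by_cases hxV : x ∈ Vs β
        · have h1 : #{e : Sym2 V | e ∈ Fs β ∧ x ∈ e} = deg (Fs β) x := rfl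
          rw [h1]
          exact ((hFs β hβ).2.1 x hxV).trans_eq hfx
        · have hempty : {e : Sym2 V | e ∈ Fs β ∧ x ∈ e} = ∅ := by
            ext e
            simp only [Set.mem_setOf_eq, Set.mem_empty_iff_false, iff_false, not_and]
            intro he hxe
            exact hxV (hEV β hβ e ((hFs β hβ).1 he) x hxe)
          simp [hempty]
      have h1 : Cardinal.lift.{1} (deg (⋃ β : Set.Iio c.ord, Fs β.1) x)
          ≤ Cardinal.lift.{0} #(Set.Iio c.ord) *
            ⨆ β : Set.Iio c.ord, Cardinal.lift.{1} #{e : Sym2 V | e ∈ Fs β.1 ∧ x ∈ e} := by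
        have hd : deg (⋃ β : Set.Iio c.ord, Fs β.1) x
            = #(⋃ β : Set.Iio c.ord, {e : Sym2 V | e ∈ Fs β.1 ∧ x ∈ e}) := by
          have : deg (⋃ β : Set.Iio c.ord, Fs β.1) x
              = #{e : Sym2 V | e ∈ (⋃ β : Set.Iio c.ord, Fs β.1) ∧ x ∈ e} := rfl
          rw [this, hsub]
        rw [hd]
        exact Cardinal.mk_iUnion_le_lift _
      have h2 : Cardinal.lift.{0} #(Set.Iio c.ord) *
          (⨆ β : Set.Iio c.ord, Cardinal.lift.{1} #{e : Sym2 V | e ∈ Fs β.1 ∧ x ∈ e})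
          ≤ Cardinal.lift.{1} c * Cardinal.lift.{1} c := by
        apply mul_le_mul'
        · rw [Cardinal.lift_uzero, hIioc]
        · exact ciSup_le' fun β => Cardinal.lift_le.2 (hdegβ β)
      have h3 : Cardinal.lift.{1} c * Cardinal.lift.{1} c = Cardinal.lift.{1} c :=
        Cardinal.mul_eq_self (Cardinal.aleph0_le_lift.2 hℵc)
      have := (h1.trans h2).trans_eq h3
      exact Cardinal.lift_le.1 this
    · -- lower bound
      have hchoice : ∀ β : ↥(Set.Ico α₀ c.ord), ∃ e : Sym2 V, e ∈ Fs β.1 ∧ x ∈ e := by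
        rintro ⟨β, hβ₁, hβ₂⟩
        have hxV := hall β hβ₁ hβ₂
        have hpos := (hFs β hβ₂).2.2.2 x hxV (hfx ▸ hκc)
        have hne : deg (Fs β) x ≠ 0 := hpos.ne'
        rw [deg, Cardinal.mk_ne_zero_iff] at hne
        obtain ⟨⟨e, he⟩⟩ := hne
        exact ⟨e, he⟩
      choose g hg1 hg2 using hchoice
      have hginj : Function.Injective g := by
        intro β₁ β₂ hgeq
        by_contra hne
        have hβne : (β₁ : Ordinal) ≠ β₂ := fun h => hne (Subtype.ext h)
        have hmem : g β₁ ∈ Es β₁.1 ∩ Es β₂.1 :=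
          ⟨(hFs β₁.1 β₁.2.2).1 (hg1 β₁), by rw [hgeq]; exact (hFs β₂.1 β₂.2.2).1 (hg1 β₂)⟩
        rw [hdisj β₁.1 β₁.2.2 β₂.1 β₂.2.2 hβne] at hmem
        exact hmem
      have hemb : Nonempty (↥(Set.Ico α₀ c.ord) ↪
          {e : Sym2 V // e ∈ (⋃ β : Set.Iio c.ord, Fs β.1) ∧ x ∈ e}) := by
        refine ⟨⟨fun β => ⟨g β, Set.mem_iUnion.2 ⟨⟨β.1, β.2.2⟩, hg1 β⟩, hg2 β⟩, ?_⟩⟩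
        intro β₁ β₂ h
        exact hginj (congrArg Subtype.val h)
      have hcard : Cardinal.lift.{0} #(Set.Ico α₀ c.ord)
          ≤ Cardinal.lift.{1} (deg (⋃ β : Set.Iio c.ord, Fs β.1) x) :=
        Cardinal.lift_mk_le'.2 hemb
      have hIco : Cardinal.lift.{1} c ≤ #(Set.Ico α₀ c.ord) := by
        by_contra hlt
        push_neg at hlt
        have hle : #(Set.Ico α₀ c.ord) ≤ Cardinal.lift.{1} κ := by
          have : #(Set.Ico α₀ c.ord) < Order.succ (Cardinal.lift.{1} κ) := by
            rw [hc, Cardinal.lift_succ] at hlt; exact hlt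
          exact Order.lt_succ_iff.1 this
        have hIioα₀ : #(Set.Iio α₀) ≤ Cardinal.lift.{1} κ := by
          rw [Ordinal.mk_Iio_ordinal]
          exact Cardinal.lift_le.2 (Order.lt_succ_iff.1 ((Cardinal.lt_ord).1 hα₀))
        have hsplit : #(Set.Iio c.ord) ≤ #(Set.Iio α₀) + #(Set.Ico α₀ c.ord) :=
          (Cardinal.mk_le_mk_of_subset Set.Iio_subset_Iio_union_Ico).trans
            (Cardinal.mk_union_le _ _)
        have : Cardinal.lift.{1} c ≤ Cardinal.lift.{1} κ := by
          calc Cardinal.lift.{1} c = #(Set.Iio c.ord) := hIioc.symm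
            _ ≤ #(Set.Iio α₀) + #(Set.Ico α₀ c.ord) := hsplit
            _ ≤ Cardinal.lift.{1} κ + Cardinal.lift.{1} κ := add_le_add hIioα₀ hle
            _ = Cardinal.lift.{1} κ := Cardinal.add_eq_self (Cardinal.aleph0_le_lift.2 hκ)
        exact absurd (Cardinal.lift_le.1 this) (not_le.2 hκc)
      have : Cardinal.lift.{1} c ≤ Cardinal.lift.{1} (deg (⋃ β : Set.Iio c.ord, Fs β.1) x) := by
        calc Cardinal.lift.{1} c ≤ #(Set.Ico α₀ c.ord) := hIco
          _ = Cardinal.lift.{0} #(Set.Ico α₀ c.ord) := (Cardinal.lift_uzero _).symm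
          _ ≤ _ := hcard
      exact Cardinal.lift_le.1 this

end FFactor
end
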